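/- arXiv:2111.13878 — 7 statements merged into one kernel-verified Lean document; each statement's English description precedes it below -/
import Mathlib

section
/- Let n be a positive integer and let {G₁, …, G_J} be a partition of {1, …, n} into nonempty pairwise disjoint index sets. Let κ₁, …, κ_J > 0 and u ∈ ℝⁿ. The function w ↦ Σ_{j=1}^J κ_j‖w_{G_j}‖ + (1/2)‖w − u‖² on ℝⁿ attains its minimum at a unique point v, and v is given blockwise by v_{G_j} = (1 − κ_j/‖u_{G_j}‖)·u_{G_j} if ‖u_{G_j}‖ > κ_j, and v_{G_j} = 0 if ‖u_{G_j}‖ ≤ κ_j, for each j = 1, …, J. -/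
lemma block_ineq {ι : Type*} (S : Finset ι) (κ : ℝ) (hκ : 0 < κ) (u v x : ι → ℝ)
    (hv : ∀ i ∈ S, v i = if κ < Real.sqrt (∑ k ∈ S, (u k) ^ 2)
        then (1 - κ / Real.sqrt (∑ k ∈ S, (u k) ^ 2)) * u i else 0) :
    κ * Real.sqrt (∑ i ∈ S, v i ^ 2) + (∑ i ∈ S, (v i - u i) ^ 2) / 2
      + (∑ i ∈ S, (x i - v i) ^ 2) / 2
    ≤ κ * Real.sqrt (∑ i ∈ S, x i ^ 2) + (∑ i ∈ S, (x i - u i) ^ 2) / 2 := by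
  set a := Real.sqrt (∑ k ∈ S, (u k) ^ 2) with ha_def
  have ha0 : 0 ≤ a := Real.sqrt_nonneg _
  have hu2 : (0:ℝ) ≤ ∑ k ∈ S, (u k) ^ 2 := Finset.sum_nonneg fun i _ => sq_nonneg _
  have ha2 : a ^ 2 = ∑ k ∈ S, (u k) ^ 2 := Real.sq_sqrt hu2
  set X := Real.sqrt (∑ i ∈ S, x i ^ 2) with hX_def
  have hX0 : 0 ≤ X := Real.sqrt_nonneg _
  have hx2 : (0:ℝ) ≤ ∑ i ∈ S, x i ^ 2 := Finset.sum_nonneg fun i _ => sq_nonneg _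
  have hX2 : X ^ 2 = ∑ i ∈ S, x i ^ 2 := Real.sq_sqrt hx2
  have hcs : ∑ i ∈ S, u i * x i ≤ a * X := by
    have h1 : (∑ i ∈ S, u i * x i) ^ 2 ≤ (∑ i ∈ S, (u i) ^ 2) * ∑ i ∈ S, x i ^ 2 :=
      Finset.sum_mul_sq_le_sq_mul_sq S u x
    nlinarith [abs_nonneg (∑ i ∈ S, u i * x i), le_abs_self (∑ i ∈ S, u i * x i),
      sq_abs (∑ i ∈ S, u i * x i), mul_nonneg ha0 hX0]
  have expand : ∑ i ∈ S, (x i - u i) ^ 2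
      = ∑ i ∈ S, (x i - v i) ^ 2 + 2 * (∑ i ∈ S, (v i - u i) * (x i - v i))
        + ∑ i ∈ S, (v i - u i) ^ 2 := by
    rw [Finset.mul_sum, ← Finset.sum_add_distrib, ← Finset.sum_add_distrib]
    exact Finset.sum_congr rfl fun i _ => by ring
  suffices h : κ * Real.sqrt (∑ i ∈ S, v i ^ 2)
      ≤ κ * X + ∑ i ∈ S, (v i - u i) * (x i - v i) by linarith
  by_cases hcase : κ < a
  · have ha_pos : 0 < a := hκ.trans hcase
    set c := 1 - κ / a with hc
    have hvv : ∀ i ∈ S, v i = c * u i := fun i hi => by rw [hv i hi, if_pos hcase]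
    have hc0 : 0 ≤ c := by
      have : κ / a < 1 := (div_lt_one ha_pos).2 hcase
      simp only [hc]; linarith
    have hsv : ∑ i ∈ S, v i ^ 2 = c ^ 2 * ∑ k ∈ S, (u k) ^ 2 := by
      rw [Finset.mul_sum]
      exact Finset.sum_congr rfl fun i hi => by rw [hvv i hi]; ring
    have hsqv : Real.sqrt (∑ i ∈ S, v i ^ 2) = c * a := by
      rw [hsv, ← ha2, show c ^ 2 * a ^ 2 = (c * a) ^ 2 by ring,
        Real.sqrt_sq (mul_nonneg hc0 ha0)]
    have hdot : ∑ i ∈ S, (v i - u i) * (x i - v i)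
        = (c - 1) * (∑ i ∈ S, u i * x i) - c * (c - 1) * (∑ k ∈ S, (u k) ^ 2) := by
      rw [Finset.mul_sum, Finset.mul_sum, ← Finset.sum_sub_distrib]
      exact Finset.sum_congr rfl fun i hi => by rw [hvv i hi]; ring
    rw [hsqv, hdot, ← ha2]
    have hca : c * a = a - κ := by rw [hc, sub_mul, div_mul_cancel₀ κ ha_pos.ne', one_mul]
    have hc1 : c - 1 = -(κ / a) := by simp [hc]
    rw [hca, hc1]
    have h2 : (κ / a) * (∑ i ∈ S, u i * x i) ≤ (κ / a) * (a * X) :=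
      mul_le_mul_of_nonneg_left hcs (by positivity)
    have h3 : (κ / a) * (a * X) = κ * X := by field_simp
    have h5 : c * -(κ / a) * a ^ 2 = -(κ * (a - κ)) := by
      rw [← hca]; field_simp
    nlinarith [h2, h3, h5]
  · have hvv : ∀ i ∈ S, v i = 0 := fun i hi => by rw [hv i hi, if_neg hcase]
    have hsv : ∑ i ∈ S, v i ^ 2 = 0 := Finset.sum_eq_zero fun i hi => by rw [hvv i hi]; ring
    have hdot : ∑ i ∈ S, (v i - u i) * (x i - v i) = -∑ i ∈ S, u i * x i := by
      rw [← Finset.sum_neg_distrib]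
      exact Finset.sum_congr rfl fun i hi => by rw [hvv i hi]; ring
    rw [hsv, Real.sqrt_zero, hdot]
    have haκ : a ≤ κ := not_lt.1 hcase
    nlinarith [hcs, hX0]

/-- The function `w ↦ Σⱼ κⱼ‖w_{Gⱼ}‖ + (1/2)‖w − u‖²` on `ℝⁿ` (where
`{G₁,…,G_J}` is a partition of `{1,…,n}` and `κⱼ > 0`) has a unique minimizer `v`,
given blockwise by `v_{Gⱼ} = (1 − κⱼ/‖u_{Gⱼ}‖)·u_{Gⱼ}` if `‖u_{Gⱼ}‖ > κⱼ` and
`v_{Gⱼ} = 0` otherwise. -/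
theorem group_soft_thresholding (n J : ℕ) (hn : 0 < n) (hJ : 0 < J)
    (G : Fin J → Finset (Fin n))
    (hGne : ∀ j, (G j).Nonempty)
    (hGdisj : ∀ j k, j ≠ k → Disjoint (G j) (G k))
    (hGcover : ∀ i, ∃ j, i ∈ G j)
    (κ : Fin J → ℝ) (hκ : ∀ j, 0 < κ j)
    (u v : EuclideanSpace ℝ (Fin n))
    (hv : ∀ j, ∀ i ∈ G j,
      v i = if κ j < Real.sqrt (∑ k ∈ G j, (u k) ^ 2)
        then (1 - κ j / Real.sqrt (∑ k ∈ G j, (u k) ^ 2)) * u i else 0) :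
    ∀ w : EuclideanSpace ℝ (Fin n), w ≠ v →
      (∑ j, κ j * Real.sqrt (∑ k ∈ G j, (v k) ^ 2)) + 1 / 2 * ‖v - u‖ ^ 2 <
      (∑ j, κ j * Real.sqrt (∑ k ∈ G j, (w k) ^ 2)) + 1 / 2 * ‖w - u‖ ^ 2 := by
  intro w hw
  have huniv : Finset.univ.biUnion G = Finset.univ := by
    ext i; simpa using hGcover i
  have hpart : ∀ f : Fin n → ℝ, ∑ i, f i = ∑ j, ∑ i ∈ G j, f i := by
    intro f
    rw [← huniv]
    exact Finset.sum_biUnion fun j _ k _ hjk => hGdisj j k hjk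
  have hnorm : ∀ y : EuclideanSpace ℝ (Fin n), ‖y‖ ^ 2 = ∑ i, (y i) ^ 2 := by
    intro y
    rw [EuclideanSpace.norm_eq, Real.sq_sqrt (Finset.sum_nonneg fun i _ => sq_nonneg _)]
    exact Finset.sum_congr rfl fun i _ => by rw [Real.norm_eq_abs, sq_abs]
  have hvu : ‖v - u‖ ^ 2 = ∑ j, ∑ i ∈ G j, (v i - u i) ^ 2 := by
    rw [hnorm, hpart fun i => ((v - u) i) ^ 2]
    exact Finset.sum_congr rfl fun j _ => Finset.sum_congr rfl fun i _ => by
      simp [PiLp.sub_apply]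
  have hwu : ‖w - u‖ ^ 2 = ∑ j, ∑ i ∈ G j, (w i - u i) ^ 2 := by
    rw [hnorm, hpart fun i => ((w - u) i) ^ 2]
    exact Finset.sum_congr rfl fun j _ => Finset.sum_congr rfl fun i _ => by
      simp [PiLp.sub_apply]
  have hwv : ‖w - v‖ ^ 2 = ∑ j, ∑ i ∈ G j, (w i - v i) ^ 2 := by
    rw [hnorm, hpart fun i => ((w - v) i) ^ 2]
    exact Finset.sum_congr rfl fun j _ => Finset.sum_congr rfl fun i _ => by
      simp [PiLp.sub_apply]
  have hwv_pos : 0 < ∑ j, ∑ i ∈ G j, (w i - v i) ^ 2 := by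
    rw [← hwv]
    have h0 : w - v ≠ 0 := sub_ne_zero.mpr hw
    exact pow_pos (norm_pos_iff.mpr h0) 2
  have hblocks : ∀ j, κ j * Real.sqrt (∑ i ∈ G j, v i ^ 2)
      + (∑ i ∈ G j, (v i - u i) ^ 2) / 2 + (∑ i ∈ G j, (w i - v i) ^ 2) / 2
      ≤ κ j * Real.sqrt (∑ i ∈ G j, w i ^ 2) + (∑ i ∈ G j, (w i - u i) ^ 2) / 2 :=
    fun j => block_ineq (G j) (κ j) (hκ j) u v w (hv j)
  have hsum := Finset.sum_le_sum fun j (_ : j ∈ Finset.univ) => hblocks j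
  rw [Finset.sum_add_distrib, Finset.sum_add_distrib, Finset.sum_add_distrib] at hsum
  simp only [← Finset.sum_div] at hsum
  rw [hvu, hwu]
  linarith [hsum, hwv_pos]
end

section
/- Let n be a positive integer, let {G₁, …, G_J} be a partition of {1, …, n} into nonempty pairwise disjoint index sets, let λ₁ ≥ 0, λ₂ ≥ 0, ω₁, …, ω_J > 0, and set p₁(x) = λ₁ Σ_{j=1}^J ω_j‖x_{G_j}‖ and p₂(x) = λ₂‖x‖₁. For any u ∈ ℝⁿ, let v be the unique minimizer of w ↦ p₂(w) + (1/2)‖w − u‖². Then the unique minimizer of w ↦ p₁(w) + p₂(w) + (1/2)‖w − u‖² coincides with the unique minimizer of w ↦ p₁(w) + (1/2)‖w − v‖²; that is, the proximal mapping of p₁ + p₂ equals the composition Prox_{p₁} ∘ Prox_{p₂}. -/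
lemma key1d (lam d x t : ℝ) (h1 : |d| ≤ lam) (h2 : d * x = lam * |x|) :
    d * (t - x) ≤ lam * |t| - lam * |x| := by
  have h3 : d * t ≤ lam * |t| :=
    calc d * t ≤ |d * t| := le_abs_self _
    _ = |d| * |t| := abs_mul _ _
    _ ≤ lam * |t| := mul_le_mul_of_nonneg_right h1 (abs_nonneg _)
  nlinarith

lemma cs_finset {ι : Type*} (s : Finset ι) (f g : ι → ℝ) :
    ∑ i ∈ s, f i * g i ≤ Real.sqrt (∑ i ∈ s, (f i) ^ 2) * Real.sqrt (∑ i ∈ s, (g i) ^ 2) := by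
  calc ∑ i ∈ s, f i * g i ≤ |∑ i ∈ s, f i * g i| := le_abs_self _
  _ = Real.sqrt ((∑ i ∈ s, f i * g i) ^ 2) := (Real.sqrt_sq_eq_abs _).symm
  _ ≤ Real.sqrt ((∑ i ∈ s, (f i) ^ 2) * (∑ i ∈ s, (g i) ^ 2)) :=
      Real.sqrt_le_sqrt (Finset.sum_mul_sq_le_sq_mul_sq s f g)
  _ = _ := Real.sqrt_mul (Finset.sum_nonneg fun i _ => sq_nonneg _) _

lemma group_ineq {ι : Type*} (s : Finset ι) (a : ℝ) (ha : 0 ≤ a) (vv ww : ι → ℝ)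
    (c : ℝ)
    (hc : c = if Real.sqrt (∑ k ∈ s, (vv k) ^ 2) ≤ a then 0
              else 1 - a / Real.sqrt (∑ k ∈ s, (vv k) ^ 2)) :
    a * (c * Real.sqrt (∑ k ∈ s, (vv k) ^ 2))
      + (1/2) * ∑ k ∈ s, (c * vv k - vv k) ^ 2
      + (1/2) * ∑ k ∈ s, (ww k - c * vv k) ^ 2
    ≤ a * Real.sqrt (∑ k ∈ s, (ww k) ^ 2) + (1/2) * ∑ k ∈ s, (ww k - vv k) ^ 2 := by
  set B := ∑ k ∈ s, (vv k) ^ 2 with hBdef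
  set A := ∑ k ∈ s, (ww k) ^ 2 with hAdef
  set P := ∑ k ∈ s, ww k * vv k with hPdef
  have hA0 : 0 ≤ A := Finset.sum_nonneg fun i _ => sq_nonneg _
  have hB0 : 0 ≤ B := Finset.sum_nonneg fun i _ => sq_nonneg _
  set Nv := Real.sqrt B with hNvdef
  set Nw := Real.sqrt A with hNwdef
  have hNv0 : 0 ≤ Nv := Real.sqrt_nonneg _
  have hNw0 : 0 ≤ Nw := Real.sqrt_nonneg _
  have hNv2 : Nv ^ 2 = B := Real.sq_sqrt hB0
  have hNw2 : Nw ^ 2 = A := Real.sq_sqrt hA0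
  have hP : P ≤ Nw * Nv := cs_finset s ww vv
  have e1 : ∑ k ∈ s, (c * vv k - vv k) ^ 2 = (c - 1) ^ 2 * B := by
    rw [hBdef, Finset.mul_sum]
    exact Finset.sum_congr rfl fun k _ => by ring
  have e2 : ∑ k ∈ s, (ww k - c * vv k) ^ 2 = A - 2 * c * P + c ^ 2 * B := by
    have : ∀ k ∈ s, (ww k - c * vv k) ^ 2
        = (ww k) ^ 2 - 2 * c * (ww k * vv k) + c ^ 2 * (vv k) ^ 2 :=
      fun k _ => by ring
    rw [Finset.sum_congr rfl this, Finset.sum_add_distrib, Finset.sum_sub_distrib,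
      ← Finset.mul_sum, ← Finset.mul_sum]
  have e3 : ∑ k ∈ s, (ww k - vv k) ^ 2 = A - 2 * P + B := by
    have : ∀ k ∈ s, (ww k - vv k) ^ 2
        = (ww k) ^ 2 - 2 * (ww k * vv k) + (vv k) ^ 2 := fun k _ => by ring
    rw [Finset.sum_congr rfl this, Finset.sum_add_distrib, Finset.sum_sub_distrib,
      ← Finset.mul_sum]
  rw [e1, e2, e3]
  by_cases hcase : Nv ≤ a
  · rw [if_pos hcase] at hc
    subst hc
    nlinarith [mul_nonneg hNw0 (sub_nonneg.2 hcase)]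
  · rw [if_neg hcase] at hc
    push_neg at hcase
    have hNvpos : 0 < Nv := lt_of_le_of_lt ha hcase
    have h1c : (1 - c) * Nv = a := by
      rw [hc]; field_simp; ring
    have h1c0 : 0 ≤ 1 - c := by
      rw [hc]; simp only [sub_sub_cancel]
      positivity
    nlinarith [mul_nonneg h1c0 (sub_nonneg.2 hP), hNv2]

/-- With `p₁(x) = λ₁ Σⱼ ωⱼ‖x_{Gⱼ}‖` and `p₂(x) = λ₂‖x‖₁`, if `v` is the
minimizer of `w ↦ p₂(w) + (1/2)‖w − u‖²`, then the unique minimizer of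
`w ↦ p₁(w) + p₂(w) + (1/2)‖w − u‖²` coincides with the unique minimizer of
`w ↦ p₁(w) + (1/2)‖w − v‖²`; i.e. `Prox_{p₁+p₂} = Prox_{p₁} ∘ Prox_{p₂}`. -/
theorem prox_decomposition (n J : ℕ) (hn : 0 < n) (hJ : 0 < J)
    (G : Fin J → Finset (Fin n))
    (hGne : ∀ j, (G j).Nonempty)
    (hGdisj : ∀ j k, j ≠ k → Disjoint (G j) (G k))
    (hGcover : ∀ i, ∃ j, i ∈ G j)
    (lam₁ lam₂ : ℝ) (hlam₁ : 0 ≤ lam₁) (hlam₂ : 0 ≤ lam₂)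
    (ω : Fin J → ℝ) (hω : ∀ j, 0 < ω j)
    (u v : EuclideanSpace ℝ (Fin n)) :
    let p₁ : EuclideanSpace ℝ (Fin n) → ℝ :=
      fun x => lam₁ * ∑ j, ω j * Real.sqrt (∑ k ∈ G j, (x k) ^ 2)
    let p₂ : EuclideanSpace ℝ (Fin n) → ℝ := fun x => lam₂ * ∑ i, |x i|
    (∀ w : EuclideanSpace ℝ (Fin n),
        p₂ v + 1 / 2 * ‖v - u‖ ^ 2 ≤ p₂ w + 1 / 2 * ‖w - u‖ ^ 2) →
    ∃ x : EuclideanSpace ℝ (Fin n),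
      (∀ w, p₁ x + p₂ x + 1 / 2 * ‖x - u‖ ^ 2 ≤ p₁ w + p₂ w + 1 / 2 * ‖w - u‖ ^ 2) ∧
      (∀ w, p₁ x + 1 / 2 * ‖x - v‖ ^ 2 ≤ p₁ w + 1 / 2 * ‖w - v‖ ^ 2) ∧
      (∀ w, (∀ w', p₁ w + p₂ w + 1 / 2 * ‖w - u‖ ^ 2 ≤ p₁ w' + p₂ w' + 1 / 2 * ‖w' - u‖ ^ 2)
        → w = x) ∧
      (∀ w, (∀ w', p₁ w + 1 / 2 * ‖w - v‖ ^ 2 ≤ p₁ w' + 1 / 2 * ‖w' - v‖ ^ 2) → w = x) := by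
  intro p₁ p₂ hv
  -- squared norm as sum of squared differences
  have normsub : ∀ y z : EuclideanSpace ℝ (Fin n), ‖y - z‖ ^ 2 = ∑ i, (y i - z i) ^ 2 := by
    intro y z
    rw [EuclideanSpace.norm_eq, Real.sq_sqrt (Finset.sum_nonneg fun i _ => sq_nonneg _)]
    exact Finset.sum_congr rfl fun i _ => by
      rw [PiLp.sub_apply, Real.norm_eq_abs, sq_abs]
  have normzero : ∀ w y : EuclideanSpace ℝ (Fin n), ‖w - y‖ ^ 2 ≤ 0 → w = y := by
    intro w y h
    have h0 : ‖w - y‖ ^ 2 = 0 := le_antisymm h (sq_nonneg _)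
    exact sub_eq_zero.mp (norm_eq_zero.mp ((pow_eq_zero_iff two_ne_zero).mp h0))
  -- soft threshold
  set tv : EuclideanSpace ℝ (Fin n) := WithLp.toLp 2
    (fun i => if u i ≤ -lam₂ then u i + lam₂ else if lam₂ ≤ u i then u i - lam₂ else 0 :
      Fin n → ℝ) with htvdef
  have htvi : ∀ i, tv i = if u i ≤ -lam₂ then u i + lam₂ else if lam₂ ≤ u i then u i - lam₂
      else 0 := fun i => rfl
  have htd1 : ∀ i, |u i - tv i| ≤ lam₂ := by
    intro i
    rw [htvi]
    split_ifs with h1 h2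
    · simp [abs_of_nonpos, hlam₂]
    · simp [abs_of_nonneg, hlam₂]
    · push_neg at h1 h2
      rw [sub_zero]
      exact le_of_lt (abs_lt.mpr ⟨by linarith, h2⟩)
  have htd2 : ∀ i, (u i - tv i) * tv i = lam₂ * |tv i| := by
    intro i
    rw [htvi]
    split_ifs with h1 h2
    · rw [abs_of_nonpos (by linarith)]; ring
    · rw [abs_of_nonneg (by linarith)]; ring
    · simp
  have htv : ∀ w : EuclideanSpace ℝ (Fin n),
      p₂ tv + 1 / 2 * ‖tv - u‖ ^ 2 + 1 / 2 * ‖w - tv‖ ^ 2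
        ≤ p₂ w + 1 / 2 * ‖w - u‖ ^ 2 := by
    intro w
    have eL : p₂ tv + 1 / 2 * ‖tv - u‖ ^ 2 + 1 / 2 * ‖w - tv‖ ^ 2
        = ∑ i, (lam₂ * |tv i| + 1 / 2 * (tv i - u i) ^ 2 + 1 / 2 * (w i - tv i) ^ 2) := by
      simp only [p₂]
      rw [normsub, normsub, Finset.mul_sum, Finset.mul_sum, Finset.mul_sum,
        ← Finset.sum_add_distrib, ← Finset.sum_add_distrib]
    have eR : p₂ w + 1 / 2 * ‖w - u‖ ^ 2
        = ∑ i, (lam₂ * |w i| + 1 / 2 * (w i - u i) ^ 2) := by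
      simp only [p₂]
      rw [normsub, Finset.mul_sum, Finset.mul_sum, ← Finset.sum_add_distrib]
    rw [eL, eR]
    apply Finset.sum_le_sum
    intro i _
    have := key1d lam₂ (u i - tv i) (tv i) (w i) (htd1 i) (htd2 i)
    nlinarith [this]
  have hveq : v = tv := by
    have h1 := hv tv
    have h2 := htv v
    exact normzero v tv (by linarith)
  have hd1 : ∀ i, |u i - v i| ≤ lam₂ := by rw [hveq]; exact htd1
  have hd2 : ∀ i, (u i - v i) * v i = lam₂ * |v i| := by rw [hveq]; exact htd2
  -- group membership
  choose jOf hjOf using hGcover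
  have hjOfeq : ∀ j, ∀ k ∈ G j, jOf k = j := by
    intro j k hk
    by_contra h
    exact (Finset.disjoint_left.mp (hGdisj _ _ h) (hjOf k)) hk
  -- shrink factors
  set c : Fin J → ℝ := fun j =>
    if Real.sqrt (∑ k ∈ G j, (v k) ^ 2) ≤ lam₁ * ω j then 0
    else 1 - lam₁ * ω j / Real.sqrt (∑ k ∈ G j, (v k) ^ 2) with hcdef
  have hcj : ∀ j, c j = if Real.sqrt (∑ k ∈ G j, (v k) ^ 2) ≤ lam₁ * ω j then 0
      else 1 - lam₁ * ω j / Real.sqrt (∑ k ∈ G j, (v k) ^ 2) := fun j => rfl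
  have ha : ∀ j, 0 ≤ lam₁ * ω j := fun j => mul_nonneg hlam₁ (hω j).le
  have hc0 : ∀ j, 0 ≤ c j := by
    intro j
    rw [hcj]
    split_ifs with h
    · exact le_rfl
    · push_neg at h
      have hpos : 0 < Real.sqrt (∑ k ∈ G j, (v k) ^ 2) := lt_of_le_of_lt (ha j) h
      have : lam₁ * ω j / Real.sqrt (∑ k ∈ G j, (v k) ^ 2) ≤ 1 :=
        (div_le_one hpos).mpr h.le
      linarith
  -- the candidate minimizer
  set x : EuclideanSpace ℝ (Fin n) := WithLp.toLp 2 (fun i => c (jOf i) * v i : Fin n → ℝ) with hxdef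
  have hxi : ∀ i, x i = c (jOf i) * v i := fun i => rfl
  have hxk : ∀ j, ∀ k ∈ G j, x k = c j * v k := by
    intro j k hk
    rw [hxi, hjOfeq j k hk]
  -- partition of sums
  have hbiu : Finset.univ.biUnion G = (Finset.univ : Finset (Fin n)) := by
    ext i
    simp only [Finset.mem_biUnion, Finset.mem_univ, true_and, iff_true]
    exact ⟨jOf i, hjOf i⟩
  have hpart : ∀ f : Fin n → ℝ, ∑ i, f i = ∑ j, ∑ k ∈ G j, f k := by
    intro f
    rw [← hbiu, Finset.sum_biUnion]
    intro j _ k _ hjk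
    exact hGdisj j k hjk
  -- strong minimality for the p₁-prox at v
  have hg : ∀ w : EuclideanSpace ℝ (Fin n),
      p₁ x + 1 / 2 * ‖x - v‖ ^ 2 + 1 / 2 * ‖w - x‖ ^ 2
        ≤ p₁ w + 1 / 2 * ‖w - v‖ ^ 2 := by
    intro w
    have eL : p₁ x + 1 / 2 * ‖x - v‖ ^ 2 + 1 / 2 * ‖w - x‖ ^ 2
        = ∑ j, (lam₁ * (ω j * Real.sqrt (∑ k ∈ G j, (x k) ^ 2))
            + 1 / 2 * ∑ k ∈ G j, (x k - v k) ^ 2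
            + 1 / 2 * ∑ k ∈ G j, (w k - x k) ^ 2) := by
      simp only [p₁]
      rw [normsub, normsub, hpart (fun i => (x i - v i) ^ 2),
        hpart (fun i => (w i - x i) ^ 2), Finset.mul_sum, Finset.mul_sum, Finset.mul_sum,
        ← Finset.sum_add_distrib, ← Finset.sum_add_distrib]
    have eR : p₁ w + 1 / 2 * ‖w - v‖ ^ 2
        = ∑ j, (lam₁ * (ω j * Real.sqrt (∑ k ∈ G j, (w k) ^ 2))
            + 1 / 2 * ∑ k ∈ G j, (w k - v k) ^ 2) := by
      simp only [p₁]
      rw [normsub, hpart (fun i => (w i - v i) ^ 2), Finset.mul_sum, Finset.mul_sum,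
        ← Finset.sum_add_distrib]
    rw [eL, eR]
    apply Finset.sum_le_sum
    intro j _
    have hx2 : ∑ k ∈ G j, (x k) ^ 2 = ∑ k ∈ G j, (c j * v k) ^ 2 :=
      Finset.sum_congr rfl fun k hk => by rw [hxk j k hk]
    have hsqx : Real.sqrt (∑ k ∈ G j, (x k) ^ 2)
        = c j * Real.sqrt (∑ k ∈ G j, (v k) ^ 2) := by
      rw [hx2]
      have : ∑ k ∈ G j, (c j * v k) ^ 2 = (c j) ^ 2 * ∑ k ∈ G j, (v k) ^ 2 := by
        rw [Finset.mul_sum]; exact Finset.sum_congr rfl fun k _ => by ring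
      rw [this, Real.sqrt_mul (sq_nonneg _), Real.sqrt_sq (hc0 j)]
    have ex1 : ∑ k ∈ G j, (x k - v k) ^ 2 = ∑ k ∈ G j, (c j * v k - v k) ^ 2 :=
      Finset.sum_congr rfl fun k hk => by rw [hxk j k hk]
    have ex2 : ∑ k ∈ G j, (w k - x k) ^ 2 = ∑ k ∈ G j, (w k - c j * v k) ^ 2 :=
      Finset.sum_congr rfl fun k hk => by rw [hxk j k hk]
    have key := group_ineq (G j) (lam₁ * ω j) (ha j) (fun k => v k) (fun k => w k)
      (c j) (hcj j)
    rw [hsqx, ex1, ex2]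
    calc lam₁ * (ω j * (c j * Real.sqrt (∑ k ∈ G j, (v k) ^ 2)))
          + 1 / 2 * ∑ k ∈ G j, (c j * v k - v k) ^ 2
          + 1 / 2 * ∑ k ∈ G j, (w k - c j * v k) ^ 2
        = lam₁ * ω j * (c j * Real.sqrt (∑ k ∈ G j, (v k) ^ 2))
          + 1 / 2 * ∑ k ∈ G j, (c j * v k - v k) ^ 2
          + 1 / 2 * ∑ k ∈ G j, (w k - c j * v k) ^ 2 := by ring
      _ ≤ lam₁ * ω j * Real.sqrt (∑ k ∈ G j, (w k) ^ 2)
          + 1 / 2 * ∑ k ∈ G j, (w k - v k) ^ 2 := key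
      _ = lam₁ * (ω j * Real.sqrt (∑ k ∈ G j, (w k) ^ 2))
          + 1 / 2 * ∑ k ∈ G j, (w k - v k) ^ 2 := by ring
  -- ℓ¹ subgradient inequality at x
  have hdx2 : ∀ i, (u i - v i) * x i = lam₂ * |x i| := by
    intro i
    rw [hxi, abs_mul, abs_of_nonneg (hc0 (jOf i))]
    calc (u i - v i) * (c (jOf i) * v i) = c (jOf i) * ((u i - v i) * v i) := by ring
      _ = c (jOf i) * (lam₂ * |v i|) := by rw [hd2]
      _ = lam₂ * (c (jOf i) * |v i|) := by ring
  have hsub : ∀ w : EuclideanSpace ℝ (Fin n),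
      p₂ x - ∑ i, (u i - v i) * x i ≤ p₂ w - ∑ i, (u i - v i) * w i := by
    intro w
    have eL : p₂ x - ∑ i, (u i - v i) * x i
        = ∑ i, (lam₂ * |x i| - (u i - v i) * x i) := by
      simp only [p₂]
      rw [Finset.mul_sum, ← Finset.sum_sub_distrib]
    have eR : p₂ w - ∑ i, (u i - v i) * w i
        = ∑ i, (lam₂ * |w i| - (u i - v i) * w i) := by
      simp only [p₂]
      rw [Finset.mul_sum, ← Finset.sum_sub_distrib]
    rw [eL, eR]
    apply Finset.sum_le_sum
    intro i _
    have := key1d lam₂ (u i - v i) (x i) (w i) (hd1 i) (hdx2 i)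
    nlinarith [this]
  -- norm identity
  set C : ℝ := ∑ i, (1 / 2 * (v i - u i) ^ 2 + (u i - v i) * v i) with hCdef
  have hnormid : ∀ y : EuclideanSpace ℝ (Fin n),
      1 / 2 * ‖y - u‖ ^ 2 = 1 / 2 * ‖y - v‖ ^ 2 - (∑ i, (u i - v i) * y i) + C := by
    intro y
    rw [normsub, normsub, hCdef, Finset.mul_sum, Finset.mul_sum,
      ← Finset.sum_sub_distrib, ← Finset.sum_add_distrib]
    exact Finset.sum_congr rfl fun i _ => by ring
  -- strong minimality for the full prox at u
  have hF : ∀ w : EuclideanSpace ℝ (Fin n),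
      p₁ x + p₂ x + 1 / 2 * ‖x - u‖ ^ 2 + 1 / 2 * ‖w - x‖ ^ 2
        ≤ p₁ w + p₂ w + 1 / 2 * ‖w - u‖ ^ 2 := by
    intro w
    have h1 := hg w
    have h2 := hsub w
    have h3 := hnormid w
    have h4 := hnormid x
    linarith
  refine ⟨x, ?_, ?_, ?_, ?_⟩
  · intro w
    have := hF w
    have h0 : (0:ℝ) ≤ ‖w - x‖ ^ 2 := sq_nonneg _
    linarith
  · intro w
    have := hg w
    have h0 : (0:ℝ) ≤ ‖w - x‖ ^ 2 := sq_nonneg _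
    linarith
  · intro w hw
    have h1 := hw x
    have h2 := hF w
    exact normzero w x (by linarith)
  · intro w hw
    have h1 := hw x
    have h2 := hg w
    exact normzero w x (by linarith)
end

section
/- Let n be a positive integer, let {G₁, …, G_J} be a partition of {1, …, n} into nonempty pairwise disjoint index sets, let σ > 0, λ₁ ≥ 0, λ₂ ≥ 0, ω₁, …, ω_J > 0, and set p(x) = λ₁ Σ_{j=1}^J ω_j‖x_{G_j}‖ + λ₂‖x‖₁. For u ∈ ℝⁿ define v ∈ ℝⁿ componentwise by vᵢ = sign(uᵢ)·max(|uᵢ| − σλ₂, 0). Then the unique minimizer x* of w ↦ σp(w) + (1/2)‖w − u‖² is given blockwise, for each j, by x*_{G_j} = (1 − σλ₁ω_j/‖v_{G_j}‖)·v_{G_j} if ‖v_{G_j}‖ > σλ₁ω_j, and x*_{G_j} = 0 if ‖v_{G_j}‖ ≤ σλ₁ω_j. -/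
/-- Soft-thresholding facts. -/
lemma soft_facts (a b : ℝ) (hb : 0 ≤ b) :
    |a - Real.sign a * max (|a| - b) 0| ≤ b ∧
    (a - Real.sign a * max (|a| - b) 0) * (Real.sign a * max (|a| - b) 0)
      = b * |Real.sign a * max (|a| - b) 0| := by
  rcases le_or_gt |a| b with hab | hab
  · have hm : max (|a| - b) 0 = 0 := max_eq_right (by linarith)
    rw [hm]
    simp [hab]
  · have hm : max (|a| - b) 0 = |a| - b := max_eq_left (by linarith)
    rw [hm]
    have ha0 : a ≠ 0 := by
      intro h; rw [h] at hab; simp at hab; linarith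
    rcases lt_or_gt_of_ne ha0 with hneg | hpos
    · have hs : Real.sign a = -1 := Real.sign_of_neg hneg
      have habs : |a| = -a := abs_of_neg hneg
      rw [hs, habs]
      constructor
      · rw [show a - -1 * (-a - b) = -b by ring, abs_neg, abs_of_nonneg hb]
      · rw [show (-1 : ℝ) * (-a - b) = a + b by ring,
          abs_of_neg (by linarith : a + b < 0)]
        ring
    · have hs : Real.sign a = 1 := Real.sign_of_pos hpos
      have habs : |a| = a := abs_of_pos hpos
      rw [hs, habs]
      constructor
      · rw [show a - 1 * (a - b) = b by ring, abs_of_nonneg hb]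
      · rw [show (1 : ℝ) * (a - b) = a - b by ring,
          abs_of_pos (by linarith : (0:ℝ) < a - b)]
        ring

/-- Cauchy–Schwarz helper. -/
lemma cauchy_aux {ι : Type*} (S : Finset ι) (s z : ι → ℝ)
    (hs : ∑ i ∈ S, s i ^ 2 ≤ 1) :
    ∑ i ∈ S, s i * z i ≤ Real.sqrt (∑ i ∈ S, z i ^ 2) := by
  have hz : 0 ≤ ∑ i ∈ S, z i ^ 2 := Finset.sum_nonneg fun i _ => sq_nonneg _
  have hcs := Finset.sum_mul_sq_le_sq_mul_sq S s z
  have h1 : (∑ i ∈ S, s i * z i) ^ 2 ≤ ∑ i ∈ S, z i ^ 2 := by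
    calc (∑ i ∈ S, s i * z i) ^ 2 ≤ (∑ i ∈ S, s i ^ 2) * ∑ i ∈ S, z i ^ 2 := hcs
      _ ≤ 1 * ∑ i ∈ S, z i ^ 2 := by
          apply mul_le_mul_of_nonneg_right hs hz
      _ = ∑ i ∈ S, z i ^ 2 := one_mul _
  calc ∑ i ∈ S, s i * z i ≤ |∑ i ∈ S, s i * z i| := le_abs_self _
    _ = Real.sqrt ((∑ i ∈ S, s i * z i) ^ 2) := (Real.sqrt_sq_eq_abs _).symm
    _ ≤ Real.sqrt (∑ i ∈ S, z i ^ 2) := Real.sqrt_le_sqrt h1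

/-- Per-block subgradient inequality. -/
lemma block_ineq_s5 {ι : Type*} (S : Finset ι) (A L : ℝ) (hA : 0 ≤ A) (hL : 0 ≤ L)
    (z x s t uu : ι → ℝ)
    (hs2 : ∑ i ∈ S, s i ^ 2 ≤ 1)
    (hsx : ∑ i ∈ S, s i * x i = Real.sqrt (∑ i ∈ S, x i ^ 2))
    (ht1 : ∀ i ∈ S, |t i| ≤ 1)
    (ht2 : ∀ i ∈ S, L * (t i * x i) = L * |x i|)
    (hstat : ∀ i ∈ S, A * s i + L * t i + (x i - uu i) = 0) :
    A * Real.sqrt (∑ i ∈ S, x i ^ 2)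
      + ∑ i ∈ S, (L * |x i| + 1 / 2 * (x i - uu i) ^ 2)
      + 1 / 2 * ∑ i ∈ S, (z i - x i) ^ 2
    ≤ A * Real.sqrt (∑ i ∈ S, z i ^ 2)
      + ∑ i ∈ S, (L * |z i| + 1 / 2 * (z i - uu i) ^ 2) := by
  have key : ∀ i ∈ S,
      A * (s i * x i) + (L * |x i| + 1 / 2 * (x i - uu i) ^ 2)
        + 1 / 2 * (z i - x i) ^ 2
      ≤ A * (s i * z i) + (L * |z i| + 1 / 2 * (z i - uu i) ^ 2) := by
    intro i hi
    have h1 := hstat i hi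
    have h2 := ht2 i hi
    have h3 : L * (t i * z i) ≤ L * |z i| := by
      apply mul_le_mul_of_nonneg_left _ hL
      calc t i * z i ≤ |t i * z i| := le_abs_self _
        _ = |t i| * |z i| := abs_mul _ _
        _ ≤ 1 * |z i| := mul_le_mul_of_nonneg_right (ht1 i hi) (abs_nonneg _)
        _ = |z i| := one_mul _
    have h4 : (A * s i + L * t i + (x i - uu i)) * (z i - x i) = 0 := by
      rw [h1]; ring
    nlinarith [h4, h2, h3]
  have hsum := Finset.sum_le_sum key
  have hcz : A * (∑ i ∈ S, s i * z i) ≤ A * Real.sqrt (∑ i ∈ S, z i ^ 2) :=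
    mul_le_mul_of_nonneg_left (cauchy_aux S s z hs2) hA
  have e1 : ∑ i ∈ S, (A * (s i * x i) + (L * |x i| + 1 / 2 * (x i - uu i) ^ 2)
      + 1 / 2 * (z i - x i) ^ 2)
      = A * (∑ i ∈ S, s i * x i) + ∑ i ∈ S, (L * |x i| + 1 / 2 * (x i - uu i) ^ 2)
        + 1 / 2 * ∑ i ∈ S, (z i - x i) ^ 2 := by
    rw [Finset.mul_sum, Finset.mul_sum, ← Finset.sum_add_distrib, ← Finset.sum_add_distrib]
  have e2 : ∑ i ∈ S, (A * (s i * z i) + (L * |z i| + 1 / 2 * (z i - uu i) ^ 2))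
      = A * (∑ i ∈ S, s i * z i) + ∑ i ∈ S, (L * |z i| + 1 / 2 * (z i - uu i) ^ 2) := by
    rw [Finset.mul_sum, ← Finset.sum_add_distrib]
  rw [e1, e2] at hsum
  rw [← hsx]
  linarith

/-- With `p(x) = λ₁ Σⱼ ωⱼ‖x_{Gⱼ}‖ + λ₂‖x‖₁` and `v` the soft-thresholding
of `u` at level `σλ₂`, the unique minimizer `x*` of `w ↦ σp(w) + (1/2)‖w − u‖²` is given
blockwise by `x*_{Gⱼ} = (1 − σλ₁ωⱼ/‖v_{Gⱼ}‖)·v_{Gⱼ}` if `‖v_{Gⱼ}‖ > σλ₁ωⱼ`, and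
`x*_{Gⱼ} = 0` otherwise. -/
theorem sparse_group_prox_formula (n J : ℕ) (hn : 0 < n) (hJ : 0 < J)
    (G : Fin J → Finset (Fin n))
    (hGne : ∀ j, (G j).Nonempty)
    (hGdisj : ∀ j k, j ≠ k → Disjoint (G j) (G k))
    (hGcover : ∀ i, ∃ j, i ∈ G j)
    (σ : ℝ) (hσ : 0 < σ)
    (lam₁ lam₂ : ℝ) (hlam₁ : 0 ≤ lam₁) (hlam₂ : 0 ≤ lam₂)
    (ω : Fin J → ℝ) (hω : ∀ j, 0 < ω j)
    (u : EuclideanSpace ℝ (Fin n))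
    (v : EuclideanSpace ℝ (Fin n))
    (hvdef : ∀ i, v i = Real.sign (u i) * max (|u i| - σ * lam₂) 0)
    (xstar : EuclideanSpace ℝ (Fin n))
    (hxstar : ∀ j, ∀ i ∈ G j,
      xstar i = if σ * lam₁ * ω j < Real.sqrt (∑ k ∈ G j, (v k) ^ 2)
        then (1 - σ * lam₁ * ω j / Real.sqrt (∑ k ∈ G j, (v k) ^ 2)) * v i else 0) :
    ∀ w : EuclideanSpace ℝ (Fin n), w ≠ xstar →
      σ * (lam₁ * (∑ j, ω j * Real.sqrt (∑ k ∈ G j, (xstar k) ^ 2)) + lam₂ * ∑ i, |xstar i|)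
          + 1 / 2 * ‖xstar - u‖ ^ 2 <
      σ * (lam₁ * (∑ j, ω j * Real.sqrt (∑ k ∈ G j, (w k) ^ 2)) + lam₂ * ∑ i, |w i|)
          + 1 / 2 * ‖w - u‖ ^ 2 := by
  intro w hw
  set L : ℝ := σ * lam₂ with hLdef
  have hL : 0 ≤ L := mul_nonneg hσ.le hlam₂
  -- soft-thresholding facts
  have hsoft : ∀ i, |u i - v i| ≤ L ∧ (u i - v i) * v i = L * |v i| := by
    intro i
    rw [hvdef i]
    exact soft_facts (u i) L hL
  -- the ℓ1-subgradient t
  set t : Fin n → ℝ := fun i => if L = 0 then 0 else (u i - v i) / L with htdef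
  have ht1 : ∀ i, |t i| ≤ 1 := by
    intro i
    simp only [htdef]
    split_ifs with h
    · norm_num
    · have hLpos : 0 < L := lt_of_le_of_ne hL (Ne.symm h)
      rw [abs_div, abs_of_pos hLpos, div_le_one hLpos]
      exact (hsoft i).1
  have htuv : ∀ i, L * t i = u i - v i := by
    intro i
    simp only [htdef]
    split_ifs with h
    · have h1 : |u i - v i| ≤ 0 := h ▸ (hsoft i).1
      have heq : u i - v i = 0 := abs_eq_zero.mp (le_antisymm h1 (abs_nonneg _))
      simp only [mul_zero]
      linarith
    · field_simp
  have htv : ∀ i, L * (t i * v i) = L * |v i| := by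
    intro i
    calc L * (t i * v i) = (L * t i) * v i := by ring
      _ = (u i - v i) * v i := by rw [htuv i]
      _ = L * |v i| := (hsoft i).2
  -- partition of sums
  have hpart : ∀ f : Fin n → ℝ, ∑ i, f i = ∑ j, ∑ i ∈ G j, f i := by
    intro f
    have huniv : (Finset.univ : Finset (Fin n)) = Finset.univ.biUnion G := by
      ext i
      simp [Finset.mem_biUnion, hGcover i]
    rw [huniv, Finset.sum_biUnion]
    intro a _ b _ hab
    exact hGdisj a b hab
  -- block data
  have hblock : ∀ j,
      σ * lam₁ * ω j * Real.sqrt (∑ k ∈ G j, (xstar k) ^ 2)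
        + ∑ i ∈ G j, (L * |xstar i| + 1 / 2 * (xstar i - u i) ^ 2)
        + 1 / 2 * ∑ i ∈ G j, (w i - xstar i) ^ 2
      ≤ σ * lam₁ * ω j * Real.sqrt (∑ k ∈ G j, (w k) ^ 2)
        + ∑ i ∈ G j, (L * |w i| + 1 / 2 * (w i - u i) ^ 2) := by
    intro j
    set A : ℝ := σ * lam₁ * ω j with hAdef
    have hA : 0 ≤ A := mul_nonneg (mul_nonneg hσ.le hlam₁) (hω j).le
    set N : ℝ := Real.sqrt (∑ k ∈ G j, (v k) ^ 2) with hNdef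
    have hN0 : 0 ≤ N := Real.sqrt_nonneg _
    have hNsq : N ^ 2 = ∑ k ∈ G j, (v k) ^ 2 :=
      Real.sq_sqrt (Finset.sum_nonneg fun i _ => sq_nonneg _)
    set s : Fin n → ℝ := fun i => if A < N then v i / N else if A = 0 then 0 else v i / A
      with hsdef
    -- the coefficient c with xstar = c • v on the block
    set c : ℝ := if A < N then 1 - A / N else 0 with hcdef
    have hxc : ∀ i ∈ G j, xstar i = c * v i := by
      intro i hi
      rw [hxstar j i hi, hcdef]
      split_ifs with h
      · rfl
      · ring
    have hc0 : 0 ≤ c := by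
      rw [hcdef]
      split_ifs with h
      · have hNpos : 0 < N := lt_of_le_of_lt hA h
        have : A / N < 1 := (div_lt_one hNpos).mpr h
        linarith
      · exact le_refl 0
    -- ht2 for xstar
    have ht2 : ∀ i ∈ G j, L * (t i * xstar i) = L * |xstar i| := by
      intro i hi
      rw [hxc i hi]
      calc L * (t i * (c * v i)) = c * (L * (t i * v i)) := by ring
        _ = c * (L * |v i|) := by rw [htv i]
        _ = L * |c * v i| := by
            rw [abs_mul, abs_of_nonneg hc0]; ring
    -- hs2
    have hs2 : ∑ i ∈ G j, s i ^ 2 ≤ 1 := by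
      simp only [hsdef]
      split_ifs with h h0
      · have hNpos : 0 < N := lt_of_le_of_lt hA h
        have : ∑ i ∈ G j, (v i / N) ^ 2 = (∑ i ∈ G j, (v i) ^ 2) / N ^ 2 := by
          rw [Finset.sum_div]
          exact Finset.sum_congr rfl fun i _ => by rw [div_pow]
        have hNne : (N : ℝ) ^ 2 ≠ 0 := by positivity
        rw [this, ← hNsq, div_self hNne]
      · simp
      · have hApos : 0 < A := lt_of_le_of_ne hA (Ne.symm h0)
        have hNA : N ≤ A := le_of_not_gt h
        have : ∑ i ∈ G j, (v i / A) ^ 2 = (∑ i ∈ G j, (v i) ^ 2) / A ^ 2 := by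
          rw [Finset.sum_div]
          exact Finset.sum_congr rfl fun i _ => by rw [div_pow]
        rw [this, ← hNsq, div_le_one (by positivity)]
        exact pow_le_pow_left₀ hN0 hNA 2
    -- hsx
    have hxsum : ∑ k ∈ G j, (xstar k) ^ 2 = c ^ 2 * ∑ k ∈ G j, (v k) ^ 2 := by
      rw [Finset.mul_sum]
      exact Finset.sum_congr rfl fun i hi => by rw [hxc i hi]; ring
    have hsqrtx : Real.sqrt (∑ k ∈ G j, (xstar k) ^ 2) = c * N := by
      rw [hxsum, Real.sqrt_mul (sq_nonneg c), Real.sqrt_sq hc0, ← hNdef]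
    have hsx : ∑ i ∈ G j, s i * xstar i = Real.sqrt (∑ k ∈ G j, (xstar k) ^ 2) := by
      rw [hsqrtx]
      simp only [hsdef, hcdef]
      split_ifs with h h0
      · have hNpos : 0 < N := lt_of_le_of_lt hA h
        have hNne : N ≠ 0 := ne_of_gt hNpos
        have hsum2 : ∑ i ∈ G j, v i / N * xstar i = (1 - A / N) / N * (N ^ 2) := by
          rw [hNsq, Finset.mul_sum]
          refine Finset.sum_congr rfl fun i hi => ?_
          rw [hxc i hi, hcdef, if_pos h]
          ring
        rw [hsum2]
        calc (1 - A / N) / N * N ^ 2 = (1 - A / N) * (N / N) * N := by ring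
          _ = (1 - A / N) * N := by rw [div_self hNne, mul_one]
      · simp
      · have : ∀ i ∈ G j, v i / A * xstar i = 0 := by
          intro i hi
          rw [hxc i hi, hcdef, if_neg h]
          ring
        rw [Finset.sum_congr rfl this]
        simp
    -- stationarity
    have hstat : ∀ i ∈ G j, A * s i + L * t i + (xstar i - u i) = 0 := by
      intro i hi
      rw [htuv i, hxc i hi]
      simp only [hsdef, hcdef]
      split_ifs with h h0
      · have hNpos : 0 < N := lt_of_le_of_lt hA h
        have hNne : N ≠ 0 := ne_of_gt hNpos
        field_simp
        ring
      · -- A = 0 and ¬ A < N; then N ≤ A = 0 so N = 0, hence v i = 0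
        have hNA : N ≤ A := le_of_not_gt h
        have hNzero : N = 0 := le_antisymm (h0 ▸ hNA) hN0
        have hvsum : ∑ k ∈ G j, (v k) ^ 2 = 0 := by rw [← hNsq, hNzero]; ring
        have hvi : v i = 0 := by
          have := (Finset.sum_eq_zero_iff_of_nonneg
            (fun k _ => sq_nonneg (v k))).mp hvsum i hi
          exact pow_eq_zero_iff (n := 2) (by norm_num) |>.mp this
        rw [h0, hvi]
        ring
      · field_simp [h0]
        ring
    have := block_ineq_s5 (G j) A L hA hL w xstar s t u hs2 hsx
      (fun i _ => ht1 i) ht2 hstat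
    exact this
  -- assemble
  have hnorm : ∀ y : EuclideanSpace ℝ (Fin n), ‖y - u‖ ^ 2 = ∑ i, (y i - u i) ^ 2 := by
    intro y
    rw [EuclideanSpace.norm_eq]
    rw [Real.sq_sqrt (Finset.sum_nonneg fun i _ => sq_nonneg _)]
    refine Finset.sum_congr rfl fun i _ => ?_
    have h2 : (y - u) i = y i - u i := by simp
    rw [h2, Real.norm_eq_abs, sq_abs]
  -- strict positivity of ‖w - xstar‖²
  have hwpos : 0 < ∑ i, (w i - xstar i) ^ 2 := by
    have hne : ∃ i, w i ≠ xstar i := by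
      by_contra h
      push_neg at h
      exact hw (PiLp.ext h)
    obtain ⟨i0, hi0⟩ := hne
    have h1 : 0 < (w i0 - xstar i0) ^ 2 := by
      apply sq_pos_of_ne_zero
      exact sub_ne_zero_of_ne hi0
    calc (0:ℝ) < (w i0 - xstar i0) ^ 2 := h1
      _ ≤ ∑ i, (w i - xstar i) ^ 2 :=
        Finset.single_le_sum (f := fun i => (w i - xstar i) ^ 2)
          (fun i _ => sq_nonneg _) (Finset.mem_univ i0)
  -- rewrite both objectives
  have hobj : ∀ y : EuclideanSpace ℝ (Fin n),
      σ * (lam₁ * (∑ j, ω j * Real.sqrt (∑ k ∈ G j, (y k) ^ 2)) + lam₂ * ∑ i, |y i|)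
        + 1 / 2 * ‖y - u‖ ^ 2
      = ∑ j, (σ * lam₁ * ω j * Real.sqrt (∑ k ∈ G j, (y k) ^ 2)
          + ∑ i ∈ G j, (L * |y i| + 1 / 2 * (y i - u i) ^ 2)) := by
    intro y
    have e : ∀ j, σ * lam₁ * ω j * Real.sqrt (∑ k ∈ G j, (y k) ^ 2)
        + ∑ i ∈ G j, (L * |y i| + 1 / 2 * (y i - u i) ^ 2)
      = σ * (lam₁ * (ω j * Real.sqrt (∑ k ∈ G j, (y k) ^ 2)))
        + σ * (lam₂ * ∑ i ∈ G j, |y i|) + 1 / 2 * ∑ i ∈ G j, (y i - u i) ^ 2 := by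
      intro j
      rw [Finset.sum_add_distrib, ← Finset.mul_sum, ← Finset.mul_sum, hLdef]
      ring
    rw [Finset.sum_congr rfl (fun j _ => e j)]
    rw [hnorm y, hpart (fun i => |y i|), hpart (fun i => (y i - u i) ^ 2)]
    rw [Finset.sum_add_distrib, Finset.sum_add_distrib]
    simp only [← Finset.mul_sum]
    ring
  rw [hobj xstar, hobj w]
  have hsum := Finset.sum_le_sum (fun j (_ : j ∈ Finset.univ) => hblock j)
  rw [Finset.sum_add_distrib, Finset.sum_add_distrib, Finset.sum_add_distrib] at hsum
  have hhalf : ∑ j, 1 / 2 * ∑ i ∈ G j, (w i - xstar i) ^ 2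
      = 1 / 2 * ∑ i, (w i - xstar i) ^ 2 := by
    rw [hpart (fun i => (w i - xstar i) ^ 2), Finset.mul_sum]
  rw [hhalf] at hsum
  rw [Finset.sum_add_distrib, Finset.sum_add_distrib]
  linarith
end

section
/- Let n be a positive integer, let {G₁, …, G_J} be a partition of {1, …, n} into nonempty pairwise disjoint index sets, let σ > 0 and λ_{1,1}, …, λ_{1,J} > 0, and let v ∈ ℝⁿ. For each j, let Σ_j ∈ ℝ^{|G_j|×|G_j|} be chosen as follows: Σ_j = (σλ_{1,j}/‖v_{G_j}‖)·(I − v_{G_j}v_{G_j}ᵀ/‖v_{G_j}‖²) if ‖v_{G_j}‖ > σλ_{1,j}; Σ_j = I − (t_j/(σλ_{1,j})²)·v_{G_j}v_{G_j}ᵀ for some t_j ∈ [0, 1] if ‖v_{G_j}‖ = σλ_{1,j}; and Σ_j = I if ‖v_{G_j}‖ < σλ_{1,j}. Let Σ ∈ ℝ^{n×n} be the block-diagonal matrix with blocks Σ_j placed on the coordinates G_j, and let Θ = Diag(θ) with θ ∈ ℝⁿ satisfying θᵢ ∈ [0, 1] for all i and θᵢ = 1 whenever vᵢ ≠ 0.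 Then the matrix M = (I − Σ)Θ is symmetric and positive semidefinite. -/
open scoped Matrix

private lemma psd_smul' {n : ℕ} (c : ℝ) (hc : 0 ≤ c) {A : Matrix (Fin n) (Fin n) ℝ}
    (hA : A.PosSemidef) : (c • A).PosSemidef := by
  refine .of_dotProduct_mulVec_nonneg ?_ (fun x => ?_)
  · unfold Matrix.IsHermitian
    rw [Matrix.conjTranspose_smul, hA.1]
    simp
  · rw [Matrix.smul_mulVec, dotProduct_smul]
    exact mul_nonneg hc (hA.dotProduct_mulVec_nonneg x)

private lemma psd_vecMulVec' {n : ℕ} (w : Fin n → ℝ) : (Matrix.vecMulVec w w).PosSemidef := by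
  refine .of_dotProduct_mulVec_nonneg ?_ (fun x => ?_)
  · ext i k
    simp [Matrix.vecMulVec_apply, Matrix.conjTranspose_apply, mul_comm]
  · have h : Matrix.vecMulVec w w *ᵥ x = fun i => w i * (∑ k, w k * x k) := by
      ext i
      simp [Matrix.mulVec, Matrix.vecMulVec_apply, dotProduct, Finset.mul_sum, mul_assoc]
    rw [h]
    have h2 : dotProduct (star x) (fun i => w i * (∑ k, w k * x k))
        = (∑ k, w k * x k) * (∑ k, w k * x k) := by
      rw [dotProduct, Finset.sum_mul]
      exact Finset.sum_congr rfl fun i _ => by simp; ring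
    rw [h2]
    exact mul_self_nonneg _


/-- With `Σ` block diagonal (blocks `Σⱼ` on the coordinates `Gⱼ` as in the
generalized Jacobian of the group-soft-thresholding operator) and `Θ = Diag(θ)` with
`θᵢ ∈ [0,1]` and `θᵢ = 1` whenever `vᵢ ≠ 0`, the matrix `M = (I − Σ)Θ` is symmetric
positive semidefinite. -/
theorem jacobian_product_psd (n J : ℕ) (hn : 0 < n) (hJ : 0 < J)
    (G : Fin J → Finset (Fin n))
    (hGne : ∀ j, (G j).Nonempty)
    (hGdisj : ∀ j k, j ≠ k → Disjoint (G j) (G k))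
    (hGcover : ∀ i, ∃ j, i ∈ G j)
    (σ : ℝ) (hσ : 0 < σ) (lam : Fin J → ℝ) (hlam : ∀ j, 0 < lam j)
    (v : Fin n → ℝ) (t : Fin J → ℝ) (ht : ∀ j, 0 ≤ t j ∧ t j ≤ 1)
    (S : Matrix (Fin n) (Fin n) ℝ)
    (hSblock : ∀ j, ∀ i ∈ G j, ∀ k ∈ G j,
      S i k =
        if σ * lam j < Real.sqrt (∑ l ∈ G j, (v l) ^ 2) then
          (σ * lam j / Real.sqrt (∑ l ∈ G j, (v l) ^ 2)) *
            ((if i = k then 1 else 0) - v i * v k / (∑ l ∈ G j, (v l) ^ 2))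
        else if Real.sqrt (∑ l ∈ G j, (v l) ^ 2) = σ * lam j then
          (if i = k then 1 else 0) - (t j / (σ * lam j) ^ 2) * v i * v k
        else
          (if i = k then 1 else 0))
    (hSoff : ∀ i k : Fin n, (∀ j, ¬(i ∈ G j ∧ k ∈ G j)) → S i k = 0)
    (θ : Fin n → ℝ) (hθ : ∀ i, 0 ≤ θ i ∧ θ i ≤ 1) (hθ1 : ∀ i, v i ≠ 0 → θ i = 1) :
    ((1 - S) * Matrix.diagonal θ).IsSymm ∧ ((1 - S) * Matrix.diagonal θ).PosSemidef := by
  classical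
  have hvθ : ∀ i, v i * θ i = v i := by
    intro i
    by_cases h : v i = 0
    · simp [h]
    · rw [hθ1 i h, mul_one]
  have huniq : ∀ {i : Fin n} {j k : Fin J}, i ∈ G j → i ∈ G k → j = k := by
    intro i j k hj hk
    by_contra hne
    exact (Finset.disjoint_left.mp (hGdisj j k hne) hj) hk
  set r2 : Fin J → ℝ := fun j => ∑ l ∈ G j, (v l) ^ 2 with hr2
  set r : Fin J → ℝ := fun j => Real.sqrt (r2 j) with hr
  set c1 : Fin J → ℝ := fun j => if σ * lam j < r j then 1 - σ * lam j / r j else 0 with hc1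
  set c2 : Fin J → ℝ := fun j =>
    if σ * lam j < r j then σ * lam j / (r j * r2 j)
    else if r j = σ * lam j then t j / (σ * lam j) ^ 2 else 0 with hc2
  set w : Fin J → Fin n → ℝ := fun j i => if i ∈ G j then v i else 0 with hw
  set dθ : Fin J → Fin n → ℝ := fun j i => if i ∈ G j then θ i else 0 with hdθ
  set F : Fin J → Matrix (Fin n) (Fin n) ℝ := fun j =>
    c1 j • Matrix.diagonal (dθ j) + c2 j • Matrix.vecMulVec (w j) (w j) with hF
  have hr2nn : ∀ j, 0 ≤ r2 j := fun j => Finset.sum_nonneg fun l _ => sq_nonneg _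
  have hrsq : ∀ j, r j ^ 2 = r2 j := fun j => Real.sq_sqrt (hr2nn j)
  have hrnn : ∀ j, 0 ≤ r j := fun j => Real.sqrt_nonneg _
  have hsl : ∀ j, 0 < σ * lam j := fun j => mul_pos hσ (hlam j)
  have hc1nn : ∀ j, 0 ≤ c1 j := by
    intro j
    rw [hc1]
    dsimp only
    split_ifs with h
    · have hrpos : 0 < r j := lt_trans (hsl j) h
      have : σ * lam j / r j ≤ 1 := by
        rw [div_le_one hrpos]; exact le_of_lt h
      linarith
    · exact le_rfl
  have hc2nn : ∀ j, 0 ≤ c2 j := by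
    intro j
    rw [hc2]
    dsimp only
    split_ifs with h1 h2
    · have hrpos : 0 < r j := lt_trans (hsl j) h1
      have hr2pos : 0 < r2 j := by rw [← hrsq j]; exact pow_pos hrpos 2
      exact div_nonneg (hsl j).le (mul_nonneg hrpos.le hr2pos.le)
    · exact div_nonneg (ht j).1 (sq_nonneg _)
    · exact le_rfl
  -- each F j is PSD
  have hFpsd : ∀ j, (F j).PosSemidef := by
    intro j
    have hd : (0 : Fin n → ℝ) ≤ dθ j := by
      intro i
      rw [hdθ]
      dsimp only
      split_ifs with h
      · exact (hθ i).1
      · exact le_rfl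
    exact (psd_smul' _ (hc1nn j) (Matrix.PosSemidef.diagonal hd)).add
      (psd_smul' _ (hc2nn j) (psd_vecMulVec' _))
  -- the key identity
  have hMeq : (1 - S) * Matrix.diagonal θ = ∑ j, F j := by
    ext i k
    obtain ⟨j0, hj0⟩ := hGcover i
    rw [Matrix.sum_apply]
    rw [Finset.sum_eq_single j0 (fun b _ hb => ?_) (fun hb => absurd (Finset.mem_univ j0) hb)]
    swap
    · -- other blocks vanish
      have hib : i ∉ G b := fun h => hb (huniq h hj0)
      simp [hF, Matrix.diagonal_apply, Matrix.vecMulVec_apply, hdθ, hw, hib]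
    · -- main block
      rw [Matrix.mul_diagonal, Matrix.sub_apply, Matrix.one_apply]
      have hFapp : F j0 i k = c1 j0 * (if i = k then dθ j0 i else 0)
          + c2 j0 * (w j0 i * w j0 k) := by
        simp [hF, Matrix.diagonal_apply, Matrix.vecMulVec_apply]
      rw [hFapp]
      by_cases hk : k ∈ G j0
      · rw [hSblock j0 i hj0 k hk]
        have hfold : Real.sqrt (∑ l ∈ G j0, (v l) ^ 2) = r j0 := rfl
        have hfold2 : (∑ l ∈ G j0, (v l) ^ 2) = r2 j0 := rfl
        rw [hfold, hfold2]
        have hwi : w j0 i = v i := by simp [hw, hj0]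
        have hwk : w j0 k = v k := by simp [hw, hk]
        have hdi : dθ j0 i = θ i := by simp [hdθ, hj0]
        rw [hwi, hwk, hdi]
        have hv : v i * v k * θ k = v i * v k := by
          rw [mul_assoc, hvθ]
        by_cases h1 : σ * lam j0 < r j0
        · have hrpos : 0 < r j0 := lt_trans (hsl j0) h1
          have hr2pos : 0 < r2 j0 := by rw [← hrsq j0]; positivity
          have hr2pos : 0 < r2 j0 := by
            rw [← hrsq j0]; exact pow_pos (lt_trans (hsl j0) h1) 2
          have hc1e : c1 j0 = 1 - σ * lam j0 / r j0 := by simp only [hc1, if_pos h1]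
          have hc2e : c2 j0 = σ * lam j0 / (r j0 * r2 j0) := by simp only [hc2, if_pos h1]
          rw [hc1e, hc2e, if_pos h1]
          by_cases hik : i = k
          · subst hik
            simp only [eq_self_iff_true, if_true]
            linear_combination (σ * lam j0 / (r j0 * r2 j0)) * hv
          · simp only [if_neg hik]
            linear_combination (σ * lam j0 / (r j0 * r2 j0)) * hv
        · by_cases h2 : r j0 = σ * lam j0
          · have hc1e : c1 j0 = 0 := by simp only [hc1, if_neg h1]
            have hc2e : c2 j0 = t j0 / (σ * lam j0) ^ 2 := by
              simp only [hc2, if_neg h1, if_pos h2]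
            rw [hc1e, hc2e, if_neg h1, if_pos h2]
            by_cases hik : i = k
            · subst hik
              simp only [eq_self_iff_true, if_true]
              linear_combination (t j0 / (σ * lam j0) ^ 2) * hv
            · simp only [if_neg hik]
              linear_combination (t j0 / (σ * lam j0) ^ 2) * hv
          · have hc1e : c1 j0 = 0 := by simp only [hc1, if_neg h1]
            have hc2e : c2 j0 = 0 := by simp only [hc2, if_neg h1, if_neg h2]
            rw [hc1e, hc2e, if_neg h1, if_neg h2]
            ring
      · -- k outside the block of i
        have hik : i ≠ k := fun h => hk (h ▸ hj0)
        have hS0 : S i k = 0 := by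
          apply hSoff
          intro j ⟨hij, hkj⟩
          exact hk ((huniq hij hj0) ▸ hkj)
        have hwk : w j0 k = (0 : ℝ) := by simp [hw, hk]
        rw [hS0, hwk]
        simp only [if_neg hik]
        ring
  constructor
  · -- symmetry
    have hpsd : ((1 - S) * Matrix.diagonal θ).PosSemidef := by
      rw [hMeq]
      exact Finset.sum_induction F Matrix.PosSemidef (fun a b ha hb => ha.add hb)
        Matrix.PosSemidef.zero (fun j _ => hFpsd j)
    rw [Matrix.IsSymm, ← Matrix.conjTranspose_eq_transpose_of_trivial]
    exact hpsd.1
  · rw [hMeq]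
    exact Finset.sum_induction F Matrix.PosSemidef (fun a b ha hb => ha.add hb)
      Matrix.PosSemidef.zero (fun j _ => hFpsd j)
end

section
/- Let m, m_E, m_I, n be positive integers. Let V₁ : ℝ^m → ℝ^m be self-adjoint and positive definite, and let V₂ : ℝⁿ → ℝⁿ and V₃ : ℝ^{m_I} → ℝ^{m_I} be self-adjoint positive semidefinite with I − V₂ and I − V₃ positive semidefinite. Let A : ℝⁿ → ℝ^m, B_E : ℝⁿ → ℝ^{m_E}, B_I : ℝⁿ → ℝ^{m_I} be linear maps with adjoints A*, B_E*, B_I*. For d = (d₁, d₂, d₃) ∈ ℝ^m × ℝ^{m_E} × ℝ^{m_I}, define H(d) = (V₁d₁ + A V₂ w, B_E V₂ w, V₃d₃ + B_I V₂ w), where w = A*d₁ + B_E*d₂ + B_I*d₃. Then H is positive semidefinite, i.e., ⟨d, H(d)⟩ ≥ 0 for all d; moreover, if ⟨d, H(d)⟩ = 0, then d₁ = 0, V₃d₃ = 0, and V₂(B_E*d₂ + B_I*d₃) = 0. -/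
open RealInnerProductSpace


private lemma psd_inner_zero {E : Type*} [NormedAddCommGroup E] [InnerProductSpace ℝ E]
    (T : E →ₗ[ℝ] E) (hsa : ∀ x y, ⟪T x, y⟫ = ⟪x, T y⟫)
    (hpsd : ∀ x, 0 ≤ ⟪x, T x⟫) (x : E) (hx : ⟪x, T x⟫ = 0) : T x = 0 := by
  set c : ℝ := ⟪T x, T x⟫ with hc
  set b : ℝ := ⟪T x, T (T x)⟫ with hb
  have hb0 : 0 ≤ b := hpsd (T x)
  have hc0 : 0 ≤ c := real_inner_self_nonneg
  have hsym : ⟪x, T (T x)⟫ = c := by rw [hc, ← hsa]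
  have key : ∀ t : ℝ, 0 ≤ 2 * t * c + t ^ 2 * b := by
    intro t
    have h := hpsd (x + t • (T x))
    rw [map_add, map_smul, inner_add_left, inner_add_right, inner_add_right,
      real_inner_smul_left, real_inner_smul_left, real_inner_smul_right,
      real_inner_smul_right, hx, hsym, ← hc, ← hb] at h
    nlinarith [h]
  have hczero : c = 0 := by
    by_contra hcne
    have hcpos : 0 < c := lt_of_le_of_ne hc0 (Ne.symm hcne)
    have hk := key (-c / (b + 1))
    have hb1 : 0 < b + 1 := by linarith
    have hk2 : 0 ≤ (2 * (-c / (b + 1)) * c + (-c / (b + 1)) ^ 2 * b) * (b + 1) ^ 2 :=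
      mul_nonneg hk (sq_nonneg _)
    have heq : (2 * (-c / (b + 1)) * c + (-c / (b + 1)) ^ 2 * b) * (b + 1) ^ 2
        = c ^ 2 * (-b - 2) := by field_simp; ring
    rw [heq] at hk2
    nlinarith [mul_pos hcpos hcpos]
  have hn : ‖T x‖ ^ 2 = 0 := by rw [← real_inner_self_eq_norm_sq]; exact hczero
  have := pow_eq_zero_iff (n := 2) (by norm_num) |>.mp hn
  simpa using this

/-- With `V₁` self-adjoint positive definite, `V₂, V₃` self-adjoint positive
semidefinite with `I − V₂`, `I − V₃` positive semidefinite, and linear maps `A, B_E, B_I`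
with adjoints `A*, B_E*, B_I*`, the map
`H(d₁,d₂,d₃) = (V₁d₁ + A V₂ w, B_E V₂ w, V₃d₃ + B_I V₂ w)` with
`w = A*d₁ + B_E*d₂ + B_I*d₃` is positive semidefinite, and `⟨d, H(d)⟩ = 0` implies
`d₁ = 0`, `V₃d₃ = 0`, and `V₂(B_E*d₂ + B_I*d₃) = 0`. -/
theorem generalized_hessian_psd (m mE mI n : ℕ)
    (hm : 0 < m) (hmE : 0 < mE) (hmI : 0 < mI) (hn : 0 < n)
    (V₁ : EuclideanSpace ℝ (Fin m) →ₗ[ℝ] EuclideanSpace ℝ (Fin m))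
    (hV₁sa : ∀ x y, ⟪V₁ x, y⟫ = ⟪x, V₁ y⟫)
    (hV₁pd : ∀ x, x ≠ 0 → 0 < ⟪x, V₁ x⟫)
    (V₂ : EuclideanSpace ℝ (Fin n) →ₗ[ℝ] EuclideanSpace ℝ (Fin n))
    (hV₂sa : ∀ x y, ⟪V₂ x, y⟫ = ⟪x, V₂ y⟫)
    (hV₂psd : ∀ x, 0 ≤ ⟪x, V₂ x⟫)
    (hV₂I : ∀ x, 0 ≤ ⟪x, x - V₂ x⟫)
    (V₃ : EuclideanSpace ℝ (Fin mI) →ₗ[ℝ] EuclideanSpace ℝ (Fin mI))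
    (hV₃sa : ∀ x y, ⟪V₃ x, y⟫ = ⟪x, V₃ y⟫)
    (hV₃psd : ∀ x, 0 ≤ ⟪x, V₃ x⟫)
    (hV₃I : ∀ x, 0 ≤ ⟪x, x - V₃ x⟫)
    (A : EuclideanSpace ℝ (Fin n) →ₗ[ℝ] EuclideanSpace ℝ (Fin m))
    (Astar : EuclideanSpace ℝ (Fin m) →ₗ[ℝ] EuclideanSpace ℝ (Fin n))
    (hA : ∀ x y, ⟪A x, y⟫ = ⟪x, Astar y⟫)
    (BE : EuclideanSpace ℝ (Fin n) →ₗ[ℝ] EuclideanSpace ℝ (Fin mE))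
    (BEstar : EuclideanSpace ℝ (Fin mE) →ₗ[ℝ] EuclideanSpace ℝ (Fin n))
    (hBE : ∀ x y, ⟪BE x, y⟫ = ⟪x, BEstar y⟫)
    (BI : EuclideanSpace ℝ (Fin n) →ₗ[ℝ] EuclideanSpace ℝ (Fin mI))
    (BIstar : EuclideanSpace ℝ (Fin mI) →ₗ[ℝ] EuclideanSpace ℝ (Fin n))
    (hBI : ∀ x y, ⟪BI x, y⟫ = ⟪x, BIstar y⟫) :
    ∀ (d₁ : EuclideanSpace ℝ (Fin m)) (d₂ : EuclideanSpace ℝ (Fin mE))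
      (d₃ : EuclideanSpace ℝ (Fin mI)),
      (0 ≤ ⟪d₁, V₁ d₁ + A (V₂ (Astar d₁ + BEstar d₂ + BIstar d₃))⟫
          + ⟪d₂, BE (V₂ (Astar d₁ + BEstar d₂ + BIstar d₃))⟫
          + ⟪d₃, V₃ d₃ + BI (V₂ (Astar d₁ + BEstar d₂ + BIstar d₃))⟫) ∧
      ((⟪d₁, V₁ d₁ + A (V₂ (Astar d₁ + BEstar d₂ + BIstar d₃))⟫
          + ⟪d₂, BE (V₂ (Astar d₁ + BEstar d₂ + BIstar d₃))⟫
          + ⟪d₃, V₃ d₃ + BI (V₂ (Astar d₁ + BEstar d₂ + BIstar d₃))⟫ = 0) →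
        d₁ = 0 ∧ V₃ d₃ = 0 ∧ V₂ (BEstar d₂ + BIstar d₃) = 0) := by
  intro d₁ d₂ d₃
  set w := Astar d₁ + BEstar d₂ + BIstar d₃ with hw
  have e1 : ⟪d₁, A (V₂ w)⟫ = ⟪V₂ w, Astar d₁⟫ := by rw [real_inner_comm, hA]
  have e2 : ⟪d₂, BE (V₂ w)⟫ = ⟪V₂ w, BEstar d₂⟫ := by rw [real_inner_comm, hBE]
  have e3 : ⟪d₃, BI (V₂ w)⟫ = ⟪V₂ w, BIstar d₃⟫ := by rw [real_inner_comm, hBI]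
  have hEq : ⟪d₁, V₁ d₁ + A (V₂ w)⟫ + ⟪d₂, BE (V₂ w)⟫ + ⟪d₃, V₃ d₃ + BI (V₂ w)⟫
      = ⟪d₁, V₁ d₁⟫ + ⟪d₃, V₃ d₃⟫ + ⟪w, V₂ w⟫ := by
    have hcomm : (⟪w, V₂ w⟫ : ℝ)
        = ⟪V₂ w, Astar d₁⟫ + ⟪V₂ w, BEstar d₂⟫ + ⟪V₂ w, BIstar d₃⟫ := by
      rw [show (⟪w, V₂ w⟫ : ℝ) = ⟪V₂ w, w⟫ from real_inner_comm _ _]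
      nth_rewrite 2 [hw]
      rw [inner_add_right, inner_add_right]
    rw [inner_add_right, inner_add_right, e1, e2, e3, hcomm]
    ring
  have h1 : 0 ≤ ⟪d₁, V₁ d₁⟫ := by
    rcases eq_or_ne d₁ 0 with h | h
    · simp [h]
    · exact (hV₁pd d₁ h).le
  have h2 : 0 ≤ ⟪w, V₂ w⟫ := hV₂psd w
  have h3 : 0 ≤ ⟪d₃, V₃ d₃⟫ := hV₃psd d₃
  constructor
  · rw [hEq]; linarith
  · intro h0
    rw [hEq] at h0
    have hz1 : ⟪d₁, V₁ d₁⟫ = 0 := by linarith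
    have hz2 : ⟪w, V₂ w⟫ = 0 := by linarith
    have hz3 : ⟪d₃, V₃ d₃⟫ = 0 := by linarith
    have hd₁ : d₁ = 0 := by
      by_contra h
      exact absurd hz1 (ne_of_gt (hV₁pd d₁ h))
    refine ⟨hd₁, psd_inner_zero V₃ hV₃sa hV₃psd d₃ hz3, ?_⟩
    have hVw : V₂ w = 0 := psd_inner_zero V₂ hV₂sa hV₂psd w hz2
    have hwe : w = BEstar d₂ + BIstar d₃ := by rw [hw, hd₁, map_zero, zero_add]
    rw [← hwe]
    exact hVw
end

section
/- Let n be a positive integer, let {G₁, …, G_J} be a partition of {1, …, n} into nonempty pairwise disjoint index sets, let λ₁ ≥ 0, λ₂ > 0, ω₁, …, ω_J > 0, and set p(x) = λ₁ Σ_{j=1}^J ω_j‖x_{G_j}‖ + λ₂‖x‖₁. Fix x ∈ ℝⁿ and denote by p′(x; d) the one-sided directional derivative lim_{t→0⁺} (p(x + t·d) − p(x))/t. Then for every d ∈ ℝⁿ, the equality p′(x; d) = −p′(x; −d) holds if and only if dᵢ = 0 for every index i with xᵢ = 0. -/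
open Filter

/-- For `p(x) = λ₁ Σⱼ ωⱼ‖x_{Gⱼ}‖ + λ₂‖x‖₁` with `λ₂ > 0` and a fixed `x`,
denoting by `D d` the one-sided directional derivative `p′(x; d)`, one has
`p′(x; d) = −p′(x; −d)` if and only if `dᵢ = 0` for every `i` with `xᵢ = 0`. -/
theorem directional_derivative_linearity_iff (n J : ℕ) (hn : 0 < n) (hJ : 0 < J)
    (G : Fin J → Finset (Fin n))
    (hGne : ∀ j, (G j).Nonempty)
    (hGdisj : ∀ j k, j ≠ k → Disjoint (G j) (G k))
    (hGcover : ∀ i, ∃ j, i ∈ G j)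
    (lam₁ lam₂ : ℝ) (hlam₁ : 0 ≤ lam₁) (hlam₂ : 0 < lam₂)
    (ω : Fin J → ℝ) (hω : ∀ j, 0 < ω j)
    (x : EuclideanSpace ℝ (Fin n))
    (D : EuclideanSpace ℝ (Fin n) → ℝ)
    (hD : ∀ d : EuclideanSpace ℝ (Fin n),
      Tendsto (fun t : ℝ =>
          (((lam₁ * (∑ j, ω j * Real.sqrt (∑ k ∈ G j, ((x + t • d) k) ^ 2))
              + lam₂ * ∑ i, |(x + t • d) i|)
            - (lam₁ * (∑ j, ω j * Real.sqrt (∑ k ∈ G j, (x k) ^ 2))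
              + lam₂ * ∑ i, |x i|)) / t))
        (nhdsWithin 0 (Set.Ioi 0)) (nhds (D d))) :
    ∀ d : EuclideanSpace ℝ (Fin n),
      D d = -D (-d) ↔ ∀ i, x i = 0 → d i = 0 := by
  classical
  set φ : EuclideanSpace ℝ (Fin n) → Fin n → ℝ :=
    fun v i => if x i = 0 then |v i| else (SignType.sign (x i) : ℝ) * v i with hφ
  set ψ : EuclideanSpace ℝ (Fin n) → Fin J → ℝ :=
    fun v j => if (∑ k ∈ G j, (x k) ^ 2) = 0 then Real.sqrt (∑ k ∈ G j, (v k) ^ 2)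
      else (∑ k ∈ G j, x k * v k) / Real.sqrt (∑ k ∈ G j, (x k) ^ 2) with hψ
  have key : ∀ v : EuclideanSpace ℝ (Fin n),
      D v = lam₁ * ∑ j, ω j * ψ v j + lam₂ * ∑ i, φ v i := by
    intro v
    refine tendsto_nhds_unique (hD v) ?_
    have hsub : Set.Ioi (0:ℝ) ⊆ {(0:ℝ)}ᶜ := fun t ht => ne_of_gt ht
    have hP : ∀ i : Fin n,
        Tendsto (fun t : ℝ => (|x i + t * v i| - |x i|) / t)
          (nhdsWithin 0 (Set.Ioi 0)) (nhds (φ v i)) := by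
      intro i
      by_cases hx : x i = 0
      · simp only [hφ, hx, if_pos]
        refine tendsto_const_nhds.congr' ?_
        filter_upwards [self_mem_nhdsWithin] with t ht
        have ht' : (0:ℝ) < t := ht
        rw [zero_add, abs_zero, sub_zero, abs_mul, abs_of_pos ht',
          mul_div_cancel_left₀ _ ht'.ne']
      · simp only [hφ, hx, if_neg, if_false]
        have h1 : HasDerivAt (fun t : ℝ => x i + t * v i) (v i) 0 := by
          simpa using (hasDerivAt_mul_const (v i)).const_add (x i)
        have h2 := (hasDerivAt_abs (x := x i + 0 * v i) (by simpa using hx)).comp 0 h1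
        simp only [zero_mul, add_zero, Function.comp_def] at h2
        rw [hasDerivAt_iff_tendsto_slope] at h2
        have h3 := h2.mono_left (nhdsWithin_mono 0 hsub)
        refine h3.congr fun t => ?_
        rw [slope_def_field]
        simp
    have hQ : ∀ j : Fin J,
        Tendsto (fun t : ℝ => (Real.sqrt (∑ k ∈ G j, (x k + t * v k) ^ 2)
            - Real.sqrt (∑ k ∈ G j, (x k) ^ 2)) / t)
          (nhdsWithin 0 (Set.Ioi 0)) (nhds (ψ v j)) := by
      intro j
      by_cases hq0 : (∑ k ∈ G j, (x k) ^ 2) = 0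
      · have hxk : ∀ k ∈ G j, x k = 0 := by
          intro k hk
          have := (Finset.sum_eq_zero_iff_of_nonneg (fun k _ => sq_nonneg (x k))).mp hq0 k hk
          exact (pow_eq_zero_iff two_ne_zero).mp this
        simp only [hψ, hq0, if_pos]
        refine tendsto_const_nhds.congr' ?_
        filter_upwards [self_mem_nhdsWithin] with t ht
        have ht' : (0:ℝ) < t := ht
        have e1 : (∑ k ∈ G j, (x k + t * v k) ^ 2) = t ^ 2 * ∑ k ∈ G j, (v k) ^ 2 := by
          rw [Finset.mul_sum]
          refine Finset.sum_congr rfl fun k hk => ?_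
          rw [hxk k hk]; ring
        rw [e1, Real.sqrt_zero, sub_zero, Real.sqrt_mul (sq_nonneg t),
          Real.sqrt_sq ht'.le]
        rw [mul_div_cancel_left₀ _ ht'.ne']
      · have hq0pos : 0 < ∑ k ∈ G j, (x k) ^ 2 :=
          lt_of_le_of_ne (Finset.sum_nonneg fun k _ => sq_nonneg _) (Ne.symm hq0)
        have hsqrt_ne : Real.sqrt (∑ k ∈ G j, (x k) ^ 2) ≠ 0 :=
          (Real.sqrt_pos.mpr hq0pos).ne'
        have h1 : HasDerivAt (fun t : ℝ => ∑ k ∈ G j, (x k + t * v k) ^ 2)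
            (∑ k ∈ G j, 2 * x k * v k) 0 := by
          refine HasDerivAt.fun_sum fun k _ => ?_
          have hk : HasDerivAt (fun t : ℝ => x k + t * v k) (v k) 0 := by
            simpa using (hasDerivAt_mul_const (v k)).const_add (x k)
          simpa using hk.fun_pow 2
        have hne : (fun t : ℝ => ∑ k ∈ G j, (x k + t * v k) ^ 2) 0 ≠ 0 := by
          simpa using hq0
        have h2 := h1.sqrt hne
        rw [hasDerivAt_iff_tendsto_slope] at h2
        have h3 := h2.mono_left (nhdsWithin_mono 0 hsub)
        have hval : (∑ k ∈ G j, 2 * x k * v k) /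
            (2 * Real.sqrt (∑ k ∈ G j, (x k + 0 * v k) ^ 2)) = ψ v j := by
          simp only [hψ, hq0, if_neg, if_false]
          rw [show (∑ k ∈ G j, (x k + (0:ℝ) * v k) ^ 2) = ∑ k ∈ G j, (x k) ^ 2 by simp]
          rw [show (∑ k ∈ G j, 2 * x k * v k) = 2 * ∑ k ∈ G j, x k * v k by
            rw [Finset.mul_sum]; exact Finset.sum_congr rfl fun k _ => by ring]
          rw [mul_div_mul_left _ _ (two_ne_zero (α := ℝ))]
        rw [hval] at h3
        refine h3.congr fun t => ?_
        rw [slope_def_field]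
        simp
    have hall := ((tendsto_finset_sum Finset.univ
        (fun j (_ : j ∈ Finset.univ) => (hQ j).const_mul (ω j))).const_mul lam₁).add
      ((tendsto_finset_sum Finset.univ
        (fun i (_ : i ∈ Finset.univ) => hP i)).const_mul lam₂)
    refine hall.congr fun t => ?_
    simp only [PiLp.add_apply, PiLp.smul_apply, smul_eq_mul]
    rw [show (∑ j, ω j * ((Real.sqrt (∑ k ∈ G j, (x k + t * v k) ^ 2)
          - Real.sqrt (∑ k ∈ G j, (x k) ^ 2)) / t))
        = ((∑ j, ω j * Real.sqrt (∑ k ∈ G j, (x k + t * v k) ^ 2))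
          - ∑ j, ω j * Real.sqrt (∑ k ∈ G j, (x k) ^ 2)) / t by
      rw [← Finset.sum_sub_distrib, Finset.sum_div]
      exact Finset.sum_congr rfl fun j _ => by ring]
    rw [show (∑ i, ((|x i + t * v i| - |x i|) / t))
        = ((∑ i, |x i + t * v i|) - ∑ i, |x i|) / t by
      rw [← Finset.sum_sub_distrib, Finset.sum_div]]
    ring
  intro d
  rw [key d, key (-d)]
  have hφ2 : ∀ i, φ d i + φ (-d) i = if x i = 0 then 2 * |d i| else 0 := by
    intro i
    simp only [hφ]
    by_cases hx : x i = 0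
    · simp [hx, PiLp.neg_apply, abs_neg, two_mul]
    · simp [hx, PiLp.neg_apply]
  have hψ2 : ∀ j, ψ d j + ψ (-d) j
      = if (∑ k ∈ G j, (x k) ^ 2) = 0 then 2 * Real.sqrt (∑ k ∈ G j, (d k) ^ 2) else 0 := by
    intro j
    simp only [hψ]
    by_cases hq : (∑ k ∈ G j, (x k) ^ 2) = 0
    · simp only [hq, if_pos]
      rw [show (∑ k ∈ G j, ((-d : EuclideanSpace ℝ (Fin n)) k) ^ 2) = ∑ k ∈ G j, (d k) ^ 2 by
        exact Finset.sum_congr rfl fun k _ => by simp [PiLp.neg_apply]]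
      ring
    · simp only [hq, if_neg, if_false]
      rw [show (∑ k ∈ G j, x k * (-d : EuclideanSpace ℝ (Fin n)) k) = -∑ k ∈ G j, x k * d k by
        rw [← Finset.sum_neg_distrib]
        exact Finset.sum_congr rfl fun k _ => by simp [PiLp.neg_apply]]
      rw [neg_div]; ring
  have hsum : (lam₁ * ∑ j, ω j * ψ d j + lam₂ * ∑ i, φ d i)
      + (lam₁ * ∑ j, ω j * ψ (-d) j + lam₂ * ∑ i, φ (-d) i)
      = lam₁ * (∑ j, ω j * (ψ d j + ψ (-d) j)) + lam₂ * (∑ i, (φ d i + φ (-d) i)) := by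
    rw [show (∑ i, (φ d i + φ (-d) i)) = (∑ i, φ d i) + ∑ i, φ (-d) i from
      Finset.sum_add_distrib]
    rw [show (∑ j, ω j * (ψ d j + ψ (-d) j)) = (∑ j, ω j * ψ d j) + ∑ j, ω j * ψ (-d) j by
      rw [← Finset.sum_add_distrib]; exact Finset.sum_congr rfl fun j _ => by ring]
    ring
  have hT : ∀ j, 0 ≤ ω j * (ψ d j + ψ (-d) j) := by
    intro j
    rw [hψ2 j]
    by_cases hq : (∑ k ∈ G j, (x k) ^ 2) = 0
    · simp only [hq, if_pos]
      exact mul_nonneg (hω j).le (by positivity)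
    · simp [hq]
  have hU : ∀ i, 0 ≤ φ d i + φ (-d) i := by
    intro i
    rw [hφ2 i]
    by_cases hx : x i = 0
    · simp only [hx, if_pos]; positivity
    · simp [hx]
  constructor
  · intro h i hx
    have hz : lam₁ * (∑ j, ω j * (ψ d j + ψ (-d) j)) + lam₂ * (∑ i, (φ d i + φ (-d) i)) = 0 := by
      rw [← hsum]; linarith
    have hA : 0 ≤ lam₁ * (∑ j, ω j * (ψ d j + ψ (-d) j)) :=
      mul_nonneg hlam₁ (Finset.sum_nonneg fun j _ => hT j)
    have hBsum : 0 ≤ ∑ i, (φ d i + φ (-d) i) := Finset.sum_nonneg fun i _ => hU i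
    have hB : 0 ≤ lam₂ * (∑ i, (φ d i + φ (-d) i)) := mul_nonneg hlam₂.le hBsum
    have hB0 : lam₂ * (∑ i, (φ d i + φ (-d) i)) = 0 := by linarith
    have hS0 : (∑ i, (φ d i + φ (-d) i)) = 0 := by
      rcases mul_eq_zero.mp hB0 with h' | h'
      · exact absurd h' hlam₂.ne'
      · exact h'
    have hterm : φ d i + φ (-d) i = 0 :=
      (Finset.sum_eq_zero_iff_of_nonneg (fun i _ => hU i)).mp hS0 i (Finset.mem_univ i)
    rw [hφ2 i, if_pos hx] at hterm
    have : |d i| = 0 := by linarith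
    exact abs_eq_zero.mp this
  · intro h
    have hT0 : ∀ j, ω j * (ψ d j + ψ (-d) j) = 0 := by
      intro j
      rw [hψ2 j]
      by_cases hq : (∑ k ∈ G j, (x k) ^ 2) = 0
      · have hxk : ∀ k ∈ G j, x k = 0 := by
          intro k hk
          have := (Finset.sum_eq_zero_iff_of_nonneg (fun k _ => sq_nonneg (x k))).mp hq k hk
          exact (pow_eq_zero_iff two_ne_zero).mp this
        have hd0 : (∑ k ∈ G j, (d k) ^ 2) = 0 :=
          Finset.sum_eq_zero fun k hk => by rw [h k (hxk k hk)]; ring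
        simp [hq, hd0]
      · simp [hq]
    have hU0 : ∀ i, φ d i + φ (-d) i = 0 := by
      intro i
      rw [hφ2 i]
      by_cases hx : x i = 0
      · simp [hx, h i hx]
      · simp [hx]
    have : (lam₁ * ∑ j, ω j * ψ d j + lam₂ * ∑ i, φ d i)
        + (lam₁ * ∑ j, ω j * ψ (-d) j + lam₂ * ∑ i, φ (-d) i) = 0 := by
      rw [hsum]
      rw [Finset.sum_eq_zero fun j _ => hT0 j, Finset.sum_eq_zero fun i _ => hU0 i]
      ring
    linarith
end

section
/- Let n be a positive integer, let {G₁, …, G_J} be a partition of {1, …, n} into nonempty pairwise disjoint index sets, let λ₁ ≥ 0, λ₂ ≥ 0, ω₁, …, ω_J > 0, and set p(x) = λ₁ Σ_{j=1}^J ω_j‖x_{G_j}‖ + λ₂‖x‖₁. Then for every y ∈ ℝⁿ the following are equivalent: (a) ⟨y, x⟩ ≤ p(x) for all x ∈ ℝⁿ; (b) there exist y₁, y₂ ∈ ℝⁿ with y = y₁ + y₂, |(y₁)ᵢ| ≤ λ₂ for all i ∈ {1, …, n}, and ‖(y₂)_{G_j}‖ ≤ λ₁ω_j for all j ∈ {1,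 …, J}. In other words, the set {y : ⟨y, x⟩ ≤ p(x) for all x} equals the Minkowski sum of the ℓ∞-ball of radius λ₂ and the product of the groupwise ℓ₂-balls of radii λ₁ω_j. -/
lemma clamp_key (a c : ℝ) (hc : 0 ≤ c) :
    a * (a - max (min a c) (-c)) =
      (a - max (min a c) (-c)) ^ 2 + c * |a - max (min a c) (-c)| := by
  rcases le_total a (-c) with h | h
  · rw [min_eq_left (h.trans (by linarith)), max_eq_right h,
      abs_of_nonpos (by linarith : a - (-c) ≤ 0)]
    ring
  · rcases le_total a c with h2 | h2
    · rw [min_eq_left h2, max_eq_left h]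
      simp
    · rw [min_eq_right h2, max_eq_left (by linarith : -c ≤ c),
        abs_of_nonneg (by linarith : (0:ℝ) ≤ a - c)]
      ring

lemma cs_sum {ι : Type*} (s : Finset ι) (f g : ι → ℝ) :
    ∑ i ∈ s, f i * g i ≤
      Real.sqrt (∑ i ∈ s, f i ^ 2) * Real.sqrt (∑ i ∈ s, g i ^ 2) := by
  calc ∑ i ∈ s, f i * g i ≤ |∑ i ∈ s, f i * g i| := le_abs_self _
    _ = Real.sqrt ((∑ i ∈ s, f i * g i) ^ 2) := (Real.sqrt_sq_eq_abs _).symm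
    _ ≤ Real.sqrt ((∑ i ∈ s, f i ^ 2) * ∑ i ∈ s, g i ^ 2) :=
        Real.sqrt_le_sqrt (Finset.sum_mul_sq_le_sq_mul_sq s f g)
    _ = _ := Real.sqrt_mul (by positivity) _

/-- For `p(x) = λ₁ Σⱼ ωⱼ‖x_{Gⱼ}‖ + λ₂‖x‖₁`, a vector `y` satisfies
`⟨y, x⟩ ≤ p(x)` for all `x` if and only if `y = y₁ + y₂` with `|(y₁)ᵢ| ≤ λ₂` for all `i`
and `‖(y₂)_{Gⱼ}‖ ≤ λ₁ωⱼ` for all `j`; i.e. the set `{y : ⟨y,x⟩ ≤ p(x) ∀x}` is the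
Minkowski sum of the `ℓ∞`-ball of radius `λ₂` and the product of groupwise `ℓ₂`-balls
of radii `λ₁ωⱼ`. -/
theorem dual_norm_ball_sum (n J : ℕ) (hn : 0 < n) (hJ : 0 < J)
    (G : Fin J → Finset (Fin n))
    (hGne : ∀ j, (G j).Nonempty)
    (hGdisj : ∀ j k, j ≠ k → Disjoint (G j) (G k))
    (hGcover : ∀ i, ∃ j, i ∈ G j)
    (lam₁ lam₂ : ℝ) (hlam₁ : 0 ≤ lam₁) (hlam₂ : 0 ≤ lam₂)
    (ω : Fin J → ℝ) (hω : ∀ j, 0 < ω j) :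
    ∀ y : EuclideanSpace ℝ (Fin n),
      (∀ x : EuclideanSpace ℝ (Fin n),
          (∑ i, y i * x i) ≤
            lam₁ * (∑ j, ω j * Real.sqrt (∑ k ∈ G j, (x k) ^ 2)) + lam₂ * ∑ i, |x i|)
      ↔ ∃ y₁ y₂ : EuclideanSpace ℝ (Fin n),
          y = y₁ + y₂ ∧ (∀ i, |y₁ i| ≤ lam₂) ∧
          ∀ j, Real.sqrt (∑ k ∈ G j, (y₂ k) ^ 2) ≤ lam₁ * ω j := by
  intro y
  constructor
  · intro h
    set y₁ : EuclideanSpace ℝ (Fin n) := WithLp.toLp 2 (fun i => max (min (y i) lam₂) (-lam₂)) with hy₁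
    set y₂ : EuclideanSpace ℝ (Fin n) := WithLp.toLp 2 (fun i => y i - y₁ i) with hy₂
    refine ⟨y₁, y₂, ?_, ?_, ?_⟩
    · ext i
      show y i = y₁ i + (y i - y₁ i)
      ring
    · intro i
      rw [abs_le]
      constructor
      · exact le_max_right _ _
      · exact max_le (min_le_right _ _) (by linarith)
    · intro j
      set x : EuclideanSpace ℝ (Fin n) := WithLp.toLp 2 (fun i => if i ∈ G j then y₂ i else 0) with hx
      have hkey : ∀ i, y i * y₂ i = y₂ i ^ 2 + lam₂ * |y₂ i| := fun i =>
        clamp_key (y i) lam₂ hlam₂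
      have hL : (∑ i, y i * x i) = ∑ k ∈ G j, (y₂ k ^ 2 + lam₂ * |y₂ k|) := by
        rw [show (∑ i, y i * x i) = ∑ i, (if i ∈ G j then y i * y₂ i else 0) by
          apply Finset.sum_congr rfl; intro i _
          simp only [hx, WithLp.ofLp_toLp]; split <;> simp]
        rw [Finset.sum_ite_mem, Finset.univ_inter]
        exact Finset.sum_congr rfl fun k _ => hkey k
      have hsq : ∀ k ∈ G j, x k ^ 2 = y₂ k ^ 2 := by
        intro k hk; simp [hx, hk]
      have hG : (∑ j', ω j' * Real.sqrt (∑ k ∈ G j', (x k) ^ 2)) =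
          ω j * Real.sqrt (∑ k ∈ G j, (y₂ k) ^ 2) := by
        rw [Finset.sum_eq_single_of_mem j (Finset.mem_univ j)]
        · rw [Finset.sum_congr rfl hsq]
        · intro b _ hb
          have hz : ∀ k ∈ G b, x k ^ 2 = 0 := by
            intro k hk
            have : k ∉ G j := fun hkj =>
              (Finset.disjoint_left.mp (hGdisj b j hb) hk) hkj
            simp [hx, this]
          rw [Finset.sum_congr rfl hz]
          simp
      have hl1 : (∑ i, |x i|) = ∑ k ∈ G j, |y₂ k| := by
        rw [show (∑ i, |x i|) = ∑ i, (if i ∈ G j then |y₂ i| else 0) by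
          apply Finset.sum_congr rfl; intro i _
          simp only [hx, WithLp.ofLp_toLp]; split <;> simp]
        rw [Finset.sum_ite_mem, Finset.univ_inter]
      have h' := h x
      rw [hL, hG, hl1, Finset.sum_add_distrib, ← Finset.mul_sum] at h'
      set S := ∑ k ∈ G j, (y₂ k) ^ 2 with hS
      have hS0 : 0 ≤ S := Finset.sum_nonneg fun k _ => sq_nonneg _
      have hmain : S ≤ lam₁ * ω j * Real.sqrt S := by nlinarith [h']
      rcases eq_or_lt_of_le (Real.sqrt_nonneg S) with hz | hz
      · rw [← hz]; exact mul_nonneg hlam₁ (hω j).le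
      · have : Real.sqrt S * Real.sqrt S ≤ (lam₁ * ω j) * Real.sqrt S := by
          rw [Real.mul_self_sqrt hS0]; exact hmain
        exact le_of_mul_le_mul_right this hz
  · rintro ⟨y₁, y₂, rfl, h1, h2⟩
    intro x
    have hA : (∑ i, y₁ i * x i) ≤ lam₂ * ∑ i, |x i| := by
      rw [Finset.mul_sum]
      apply Finset.sum_le_sum
      intro i _
      calc y₁ i * x i ≤ |y₁ i * x i| := le_abs_self _
        _ = |y₁ i| * |x i| := abs_mul _ _
        _ ≤ lam₂ * |x i| := mul_le_mul_of_nonneg_right (h1 i) (abs_nonneg _)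
    have hU : (Finset.univ : Finset (Fin n)) = Finset.univ.biUnion G := by
      ext i
      simp only [Finset.mem_univ, Finset.mem_biUnion, true_iff, true_and]
      exact hGcover i
    have hpd : (↑(Finset.univ : Finset (Fin J)) : Set (Fin J)).PairwiseDisjoint G :=
      fun a _ b _ hab => hGdisj a b hab
    have hB : (∑ i, y₂ i * x i) ≤
        lam₁ * ∑ j, ω j * Real.sqrt (∑ k ∈ G j, (x k) ^ 2) := by
      rw [show (∑ i, y₂ i * x i) = ∑ j, ∑ k ∈ G j, y₂ k * x k by
        rw [hU, Finset.sum_biUnion hpd]]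
      rw [Finset.mul_sum]
      apply Finset.sum_le_sum
      intro j _
      calc ∑ k ∈ G j, y₂ k * x k
          ≤ Real.sqrt (∑ k ∈ G j, (y₂ k) ^ 2) * Real.sqrt (∑ k ∈ G j, (x k) ^ 2) :=
            cs_sum _ _ _
        _ ≤ (lam₁ * ω j) * Real.sqrt (∑ k ∈ G j, (x k) ^ 2) :=
            mul_le_mul_of_nonneg_right (h2 j) (Real.sqrt_nonneg _)
        _ = lam₁ * (ω j * Real.sqrt (∑ k ∈ G j, (x k) ^ 2)) := by ring
    calc (∑ i, (y₁ + y₂) i * x i) = (∑ i, y₂ i * x i) + ∑ i, y₁ i * x i := by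
          rw [← Finset.sum_add_distrib]
          apply Finset.sum_congr rfl
          intro i _
          show (y₁ i + y₂ i) * x i = _
          ring
      _ ≤ _ := add_le_add hB hA
end
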